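/- arXiv:1409.7409 — 7 statements merged into one kernel-verified Lean document; each statement's English description precedes it below -/
import Mathlib

section
/- For independent standard normal random variables X_1,...,X_n and real numbers a_1,...,a_n, the p-th moment E[(∑_i a_i X_i^2)^p] equals (p!/2^p) ∑_λ (∏_{k∈λ} binomial(2k,k)) m_λ(a_1,...,a_n), where the sum is over all integer partitions λ of p and m_λ is the monomial symmetric polynomial with exponent pattern λ. -/
open MeasureTheory ProbabilityTheory
open Real
open scoped ENNReal NNReal

/-- The value of the monomial symmetric polynomial `m_λ` at `a₁,…,aₙ`:
the sum of all distinct monomials whose multiset of (nonzero) exponents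
equals the parts of the partition `λ`. -/
noncomputable def monomialSymValue {n p : ℕ} (lam : Nat.Partition p) (a : Fin n → ℝ) : ℝ :=
  ∑ k ∈ (Finset.Nat.antidiagonalTuple n p).filter
      (fun k => (Finset.univ.val.map k).filter (fun m => 0 < m) = lam.parts),
    ∏ i, a i ^ k i

lemma gamma_nat_add_half (k : ℕ) :
    Real.Gamma (k + 1/2) = Real.sqrt Real.pi * (2*k).factorial / (4^k * k.factorial) := by
  induction k with
  | zero => simpa using Real.Gamma_one_half_eq
  | succ k ih =>
    have h : ((k+1 : ℕ) : ℝ) + 1/2 = (k + 1/2) + 1 := by push_cast; ring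
    rw [h, Real.Gamma_add_one (by positivity), ih]
    have h2 : (2*(k+1)).factorial = (2*k+2) * ((2*k+1) * (2*k).factorial) := by
      have h3 : 2*(k+1) = (2*k+1) + 1 := by ring
      rw [h3, Nat.factorial_succ, Nat.factorial_succ]
    rw [h2]
    push_cast [Nat.factorial_succ]
    have hk : (k.factorial : ℝ) ≠ 0 := Nat.cast_ne_zero.mpr k.factorial_ne_zero
    field_simp
    ring

lemma integral_pow_gaussianReal (k : ℕ) :
    ∫ x, x ^ (2*k) ∂(gaussianReal 0 1) = (2*k).factorial / (2^k * k.factorial) := by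
  have hrepr : (gaussianReal 0 1)
      = volume.withDensity (fun x => ((gaussianPDFReal 0 1 x).toNNReal : ℝ≥0∞)) := by
    rw [gaussianReal_of_var_ne_zero 0 one_ne_zero]; rfl
  rw [hrepr, integral_withDensity_eq_integral_smul (measurable_gaussianPDFReal 0 1).real_toNNReal]
  have hpdf : ∀ x : ℝ, ((gaussianPDFReal 0 1 x).toNNReal : ℝ≥0) • (x ^ (2*k))
      = (Real.sqrt (2*π))⁻¹ * ((fun y => y ^ (2*k) * Real.exp (-(1/2) * y^2)) |x|) := by
    intro x
    rw [NNReal.smul_def, smul_eq_mul,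
      Real.coe_toNNReal _ (gaussianPDFReal_nonneg 0 1 x)]
    simp only [gaussianPDFReal, NNReal.coe_one, mul_one, sub_zero]
    rw [Even.pow_abs ⟨k, by ring⟩, sq_abs]
    rw [show -x^2/2 = -(1/2) * x^2 by ring]
    ring
  simp only [hpdf]
  rw [integral_const_mul, integral_comp_abs (f := fun y => y ^ (2*k) * Real.exp (-(1/2) * y^2))]
  have key : ∫ x in Set.Ioi (0:ℝ), x ^ (2*k) * Real.exp (-(1/2) * x^2)
      = (1/2:ℝ) ^ (-(((2*k:ℕ):ℝ)+1)/2) * (1/2) * Real.Gamma ((((2*k:ℕ):ℝ)+1)/2) := by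
    rw [← integral_rpow_mul_exp_neg_mul_rpow (p := 2) (q := ((2*k:ℕ):ℝ)) (b := 1/2)
      (by norm_num) (lt_of_lt_of_le neg_one_lt_zero (Nat.cast_nonneg _)) (by norm_num)]
    refine setIntegral_congr_fun measurableSet_Ioi fun x hx => ?_
    rw [Real.rpow_natCast, show ((2:ℝ)) = ((2:ℕ):ℝ) by norm_num, Real.rpow_natCast]
  have hexp : -(((2*k:ℕ):ℝ)+1)/2 = -((k:ℝ)+1/2) := by push_cast; ring
  have harg : (((2*k:ℕ):ℝ)+1)/2 = (k:ℝ) + 1/2 := by push_cast; ring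
  rw [key, hexp, harg, gamma_nat_add_half]
  have h1 : (1/2:ℝ) ^ (-((k:ℝ)+1/2)) = 2 ^ k * Real.sqrt 2 := by
    rw [one_div, Real.inv_rpow (by norm_num), Real.rpow_neg (by norm_num), inv_inv,
      Real.rpow_add (by norm_num), Real.rpow_natCast]
    rw [show ((2:ℝ)⁻¹) = (1/2:ℝ) by norm_num, ← Real.sqrt_eq_rpow]
  rw [h1, Real.sqrt_mul (by norm_num : (0:ℝ) ≤ 2)]
  have h4 : (4:ℝ)^k = 2^k * 2^k := by rw [← mul_pow]; norm_num
  have hs2 : Real.sqrt 2 ≠ 0 := by positivity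
  have hsp : Real.sqrt π ≠ 0 := by positivity
  have h2k : (2:ℝ)^k ≠ 0 := by positivity
  have hkf : (k.factorial : ℝ) ≠ 0 := Nat.cast_ne_zero.mpr k.factorial_ne_zero
  rw [h4]
  field_simp

lemma integrable_pow_gaussianReal (m : ℕ) :
    Integrable (fun x : ℝ => x ^ m) (gaussianReal 0 1) := by
  have hrepr : (gaussianReal 0 1)
      = volume.withDensity (fun x => ((gaussianPDFReal 0 1 x).toNNReal : ℝ≥0∞)) := by
    rw [gaussianReal_of_var_ne_zero 0 one_ne_zero]; rfl
  rw [hrepr, integrable_withDensity_iff_integrable_smul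
    (measurable_gaussianPDFReal 0 1).real_toNNReal]
  have hInt : Integrable (fun x : ℝ => x ^ ((m:ℝ)) * Real.exp (-(1/2) * x^2)) :=
    integrable_rpow_mul_exp_neg_mul_sq (by norm_num)
      (lt_of_lt_of_le neg_one_lt_zero (Nat.cast_nonneg _))
  have h2 : Integrable (fun x : ℝ => (Real.sqrt (2*π))⁻¹ * (x ^ m * Real.exp (-(1/2) * x^2))) := by
    refine Integrable.const_mul ?_ _
    simpa only [Real.rpow_natCast] using hInt
  refine h2.congr (Filter.Eventually.of_forall fun x => ?_)
  simp only [NNReal.smul_def, smul_eq_mul, Real.coe_toNNReal _ (gaussianPDFReal_nonneg 0 1 x)]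
  simp only [gaussianPDFReal, NNReal.coe_one, mul_one, sub_zero]
  rw [show -x^2/2 = -(1/2) * x^2 by ring]
  ring

lemma integral_prod_indep_pow {Ω : Type*} [MeasurableSpace Ω] (μ : Measure Ω)
    [IsProbabilityMeasure μ] {n : ℕ} (X : Fin n → Ω → ℝ) (hmeas : ∀ i, Measurable (X i))
    (hindep : iIndepFun X μ) (m : Fin n → ℕ)
    (hI : ∀ i, Integrable (fun ω => X i ω ^ (2 * m i)) μ) (s : Finset (Fin n)) :
    Integrable (fun ω => ∏ i ∈ s, X i ω ^ (2 * m i)) μ ∧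
      ∫ ω, ∏ i ∈ s, X i ω ^ (2 * m i) ∂μ = ∏ i ∈ s, ∫ ω, X i ω ^ (2 * m i) ∂μ := by
  classical
  have hYmeas : ∀ i, Measurable (fun ω => X i ω ^ (2 * m i)) := fun i => (hmeas i).pow_const _
  have hYindep : iIndepFun (fun i ω => X i ω ^ (2 * m i)) μ :=
    hindep.comp (fun i x => x ^ (2 * m i)) (fun i => measurable_id.pow_const _)
  induction s using Finset.induction with
  | empty => simp
  | @insert j s hj ih =>
    have hprodfn : (∏ i ∈ s, (fun i ω => X i ω ^ (2 * m i)) i)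
        = fun ω => ∏ i ∈ s, X i ω ^ (2 * m i) := by
      funext ω; exact Finset.prod_apply ω s _
    have hsep : IndepFun (fun ω => ∏ i ∈ s, X i ω ^ (2 * m i))
        (fun ω => X j ω ^ (2 * m j)) μ := by
      rw [← hprodfn]
      exact hYindep.indepFun_finsetProd_of_notMem hYmeas hj
    have hintS : Integrable (fun ω => ∏ i ∈ s, X i ω ^ (2 * m i)) μ := ih.1
    have hmul : Integrable (fun ω => (∏ i ∈ s, X i ω ^ (2 * m i)) * X j ω ^ (2 * m j)) μ := by
      have := hsep.integrable_mul hintS (hI j)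
      exact this
    constructor
    · refine hmul.congr (Filter.Eventually.of_forall fun ω => ?_)
      simp only [Finset.prod_insert hj]; ring
    · have heq : ∀ ω : Ω, ∏ i ∈ insert j s, X i ω ^ (2 * m i)
          = (∏ i ∈ s, X i ω ^ (2 * m i)) * X j ω ^ (2 * m j) := by
        intro ω; rw [Finset.prod_insert hj]; ring
      simp only [heq]
      have h3 := hsep.integral_mul_eq_mul_integral hintS.aestronglyMeasurable (hI j).aestronglyMeasurable
      rw [show (fun ω => (∏ i ∈ s, X i ω ^ (2 * m i)) * X j ω ^ (2 * m j))
          = ((fun ω => ∏ i ∈ s, X i ω ^ (2 * m i)) * fun ω => X j ω ^ (2 * m j)) from rfl,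
        h3, ih.2, Finset.prod_insert hj]
      ring

lemma coeff_identity {n p : ℕ} (k : Fin n → ℕ) (hk : ∑ i, k i = p) :
    (Nat.multinomial Finset.univ k : ℝ)
        * ∏ i, (((2 * k i).factorial : ℝ) / (2^(k i) * (k i).factorial))
      = (p.factorial : ℝ) / 2^p * ∏ i, ((2 * k i).choose (k i) : ℝ) := by
  have hms : (∏ i, ((k i).factorial : ℝ)) * (Nat.multinomial Finset.univ k : ℝ)
      = (p.factorial : ℝ) := by
    rw [← hk]
    exact_mod_cast congrArg (Nat.cast : ℕ → ℝ) (Nat.multinomial_spec Finset.univ k)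
  have hch : ∀ i : Fin n, ((2 * k i).factorial : ℝ)
      = ((2 * k i).choose (k i) : ℝ) * (k i).factorial * (k i).factorial := by
    intro i
    have h := Nat.choose_mul_factorial_mul_factorial
      (show k i ≤ 2 * k i by omega)
    have h2 : 2 * k i - k i = k i := by omega
    rw [h2] at h
    exact_mod_cast congrArg (Nat.cast : ℕ → ℝ) h.symm
  have h2p : (∏ i : Fin n, (2:ℝ)^(k i)) = 2^p := by
    rw [Finset.prod_pow_eq_pow_sum, hk]
  calc (Nat.multinomial Finset.univ k : ℝ)
        * ∏ i, (((2 * k i).factorial : ℝ) / (2^(k i) * (k i).factorial))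
      = (Nat.multinomial Finset.univ k : ℝ)
        * ((∏ i, ((2 * k i).factorial : ℝ)) / ((∏ i : Fin n, (2:ℝ)^(k i)) * ∏ i, ((k i).factorial : ℝ))) := by
        rw [Finset.prod_div_distrib, Finset.prod_mul_distrib]
    _ = (p.factorial : ℝ) / 2^p * ∏ i, ((2 * k i).choose (k i) : ℝ) := by
        rw [h2p]
        simp only [hch]
        rw [Finset.prod_mul_distrib, Finset.prod_mul_distrib]
        have hf : (∏ i, ((k i).factorial : ℝ)) ≠ 0 :=
          Finset.prod_ne_zero_iff.mpr fun i _ => Nat.cast_ne_zero.mpr (k i).factorial_ne_zero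
        have h2ne : (2:ℝ)^p ≠ 0 := by positivity
        field_simp
        linear_combination (∏ i, ((2 * k i).choose (k i) : ℝ)) * hms

noncomputable def partOf {n : ℕ} (p : ℕ) (k : Fin n → ℕ) : Nat.Partition p :=
  if h : ((Finset.univ.val.map k).filter (fun m => 0 < m)).sum = p then
    { parts := (Finset.univ.val.map k).filter (fun m => 0 < m)
      parts_pos := fun hi => (Multiset.mem_filter.mp hi).2
      parts_sum := h }
  else default

lemma filter_pos_sum {n p : ℕ} (k : Fin n → ℕ) (hk : ∑ i, k i = p) :
    ((Finset.univ.val.map k).filter (fun m => 0 < m)).sum = p := by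
  classical
  have h1 := Multiset.sum_filter_add_sum_filter_not (fun m => 0 < m) (s := Finset.univ.val.map k)
  have h2 : ((Finset.univ.val.map k).filter (fun m => ¬ 0 < m)).sum = 0 := by
    apply Multiset.sum_eq_zero
    intro x hx
    have := (Multiset.mem_filter.mp hx).2
    omega
  have h3 : (Finset.univ.val.map k).sum = p := hk
  omega

lemma partOf_eq_iff {n p : ℕ} (k : Fin n → ℕ) (hk : ∑ i, k i = p) (lam : Nat.Partition p) :
    partOf p k = lam ↔ (Finset.univ.val.map k).filter (fun m => 0 < m) = lam.parts := by
  rw [partOf, dif_pos (filter_pos_sum k hk)]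
  constructor
  · intro h; rw [← h]
  · intro h; exact Nat.Partition.ext h

lemma prod_map_filter_choose {n : ℕ} (k : Fin n → ℕ) :
    (((Finset.univ.val.map k).filter (fun m => 0 < m)).map
        (fun m => ((2 * m).choose m : ℝ))).prod
      = ∏ i, ((2 * k i).choose (k i) : ℝ) := by
  classical
  have h1 : ∏ i, ((2 * k i).choose (k i) : ℝ)
      = ((Finset.univ.val.map k).map (fun m => ((2 * m).choose m : ℝ))).prod := by
    rw [Multiset.map_map]; rfl
  rw [h1]
  conv_rhs => rw [← Multiset.filter_add_not (fun m => 0 < m) (Finset.univ.val.map k)]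
  rw [Multiset.map_add, Multiset.prod_add]
  have h2 : (((Finset.univ.val.map k).filter (fun m => ¬ 0 < m)).map
      (fun m => ((2 * m).choose m : ℝ))).prod = 1 := by
    apply Multiset.prod_eq_one
    intro x hx
    obtain ⟨m, hm, rfl⟩ := Multiset.mem_map.mp hx
    have hm0 : m = 0 := by have := (Multiset.mem_filter.mp hm).2; omega
    simp [hm0]
  rw [h2, mul_one]

/-- For independent standard Gaussians `X₁,…,Xₙ` and reals `a₁,…,aₙ`,
`E[(∑ aᵢXᵢ²)^p] = (p!/2^p) ∑_λ (∏_{k∈λ} C(2k,k)) m_λ(a)`, summing over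
partitions `λ` of `p`. -/
theorem moment_weighted_sum_sq_gaussian
    {Ω : Type*} [MeasurableSpace Ω] (μ : Measure Ω) [IsProbabilityMeasure μ]
    (n p : ℕ) (X : Fin n → Ω → ℝ) (hmeas : ∀ i, Measurable (X i))
    (hindep : iIndepFun X μ)
    (hgauss : ∀ i, Measure.map (X i) μ = gaussianReal 0 1)
    (a : Fin n → ℝ) :
    ∫ ω, (∑ i, a i * X i ω ^ 2) ^ p ∂μ
      = (p.factorial : ℝ) / 2 ^ p *
        ∑ lam : Nat.Partition p,
          (lam.parts.map fun k => (Nat.choose (2 * k) k : ℝ)).prod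
            * monomialSymValue lam a := by
  classical
  have hmom : ∀ (i : Fin n) (m : ℕ),
      ∫ ω, X i ω ^ (2 * m) ∂μ = ((2 * m).factorial : ℝ) / (2 ^ m * m.factorial) := by
    intro i m
    have h := integral_pow_gaussianReal m
    rw [← hgauss i, integral_map (f := fun x : ℝ => x ^ (2 * m)) (hmeas i).aemeasurable
      (measurable_id.pow_const _).aestronglyMeasurable] at h
    exact h
  have hIi : ∀ (i : Fin n) (m : ℕ), Integrable (fun ω => X i ω ^ (2 * m)) μ := by
    intro i m
    have h := integrable_pow_gaussianReal (2 * m)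
    rw [← hgauss i] at h
    exact (integrable_map_measure (measurable_id.pow_const _).aestronglyMeasurable
      (hmeas i).aemeasurable).mp h
  have expand : ∀ ω : Ω, (∑ i, a i * X i ω ^ 2) ^ p
      = ∑ k ∈ Finset.Nat.antidiagonalTuple n p,
          ((Nat.multinomial Finset.univ k : ℝ) * ∏ i, a i ^ k i)
            * ∏ i, X i ω ^ (2 * k i) := by
    intro ω
    rw [← Finset.piAntidiag_univ_fin_eq_antidiagonalTuple,
      Finset.sum_pow_eq_sum_piAntidiag]
    refine Finset.sum_congr rfl fun k hk => ?_
    rw [mul_assoc]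
    congr 1
    rw [← Finset.prod_mul_distrib]
    refine Finset.prod_congr rfl fun i _ => ?_
    rw [mul_pow, ← pow_mul]
  have hprodint : ∀ k : Fin n → ℕ,
      Integrable (fun ω => ∏ i, X i ω ^ (2 * k i)) μ ∧
        ∫ ω, ∏ i, X i ω ^ (2 * k i) ∂μ = ∏ i, ∫ ω, X i ω ^ (2 * k i) ∂μ :=
    fun k => integral_prod_indep_pow μ X hmeas hindep k (fun i => hIi i (k i)) Finset.univ
  calc ∫ ω, (∑ i, a i * X i ω ^ 2) ^ p ∂μ
      = ∑ k ∈ Finset.Nat.antidiagonalTuple n p,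
          ((Nat.multinomial Finset.univ k : ℝ) * ∏ i, a i ^ k i)
            * ∫ ω, ∏ i, X i ω ^ (2 * k i) ∂μ := by
        simp_rw [expand]
        rw [integral_finset_sum _ (fun k _ => ((hprodint k).1).const_mul _)]
        exact Finset.sum_congr rfl fun k _ => integral_const_mul _ _
    _ = ∑ k ∈ Finset.Nat.antidiagonalTuple n p,
          (p.factorial : ℝ) / 2 ^ p * ((∏ i, ((2 * k i).choose (k i) : ℝ)) * ∏ i, a i ^ k i) := by
        refine Finset.sum_congr rfl fun k hk => ?_
        have hksum : ∑ i, k i = p := Finset.Nat.mem_antidiagonalTuple.mp hk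
        rw [(hprodint k).2]
        simp_rw [hmom]
        have hc := coeff_identity k hksum
        linear_combination (∏ i, a i ^ k i) * hc
    _ = (p.factorial : ℝ) / 2 ^ p * ∑ k ∈ Finset.Nat.antidiagonalTuple n p,
          (∏ i, ((2 * k i).choose (k i) : ℝ)) * ∏ i, a i ^ k i := by
        rw [Finset.mul_sum]
    _ = (p.factorial : ℝ) / 2 ^ p *
        ∑ lam : Nat.Partition p,
          (lam.parts.map fun m => (Nat.choose (2 * m) m : ℝ)).prod
            * monomialSymValue lam a := by
        congr 1
        rw [← Finset.sum_fiberwise (Finset.Nat.antidiagonalTuple n p) (fun k => partOf p k)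
          (fun k => (∏ i, ((2 * k i).choose (k i) : ℝ)) * ∏ i, a i ^ k i)]
        refine Finset.sum_congr rfl fun lam _ => ?_
        rw [monomialSymValue, Finset.mul_sum]
        refine Finset.sum_congr ?_ ?_
        · refine Finset.filter_congr fun k hk => ?_
          exact partOf_eq_iff k (Finset.Nat.mem_antidiagonalTuple.mp hk) lam
        · intro k hk
          have hparts : (Finset.univ.val.map k).filter (fun m => 0 < m) = lam.parts :=
            (Finset.mem_filter.mp hk).2
          rw [← hparts, prod_map_filter_choose]
end

section
/- For independent standard normal random variables X_1,...,X_n,Y_1,...,Y_n and real numbers a_1,...,a_n, E[(∑_i a_i(X_i^2+Y_i^2))^p] = 2^p p! h_p(a_1,...,a_n), where h_p is the complete homogeneous symmetric polynomial of degree p. -/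
open MeasureTheory ProbabilityTheory Real Set
open scoped ENNReal

/-- The complete homogeneous symmetric polynomial `h_p` evaluated at `a₁,…,aₙ`:
the sum of all monomials of total degree `p`. -/
noncomputable def completeHomogeneousValue (n p : ℕ) (a : Fin n → ℝ) : ℝ :=
  ∑ k ∈ Finset.Nat.antidiagonalTuple n p, ∏ i, a i ^ k i

section Aux

lemma int1d (j : ℕ) :
    Integrable (fun x : ℝ => x ^ j * Real.exp (-(2⁻¹) * x ^ 2)) := by
  have h := integrable_rpow_mul_exp_neg_mul_sq (b := (2⁻¹ : ℝ)) (by norm_num)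
    (s := (j : ℝ)) (lt_of_lt_of_le neg_one_lt_zero (Nat.cast_nonneg j))
  simpa [Real.rpow_natCast] using h

lemma pdf_prod (x y : ℝ) : gaussianPDFReal 0 1 x * gaussianPDFReal 0 1 y
    = (2 * π)⁻¹ * Real.exp (-(2⁻¹) * (x ^ 2 + y ^ 2)) := by
  have h2π : (0:ℝ) ≤ 2 * π := by positivity
  simp only [gaussianPDFReal, NNReal.coe_one, mul_one, sub_zero]
  rw [mul_mul_mul_comm, ← mul_inv, Real.mul_self_sqrt h2π, ← Real.exp_add]
  rw [show -x^2/2 + -y^2/2 = -(2⁻¹)*(x^2+y^2) by ring]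

lemma withDensity_prod_withDensity {f g : ℝ → ℝ≥0∞} (hf : Measurable f) (hg : Measurable g)
    (h1 : SigmaFinite (volume.withDensity f)) (h2 : SigmaFinite (volume.withDensity g)) :
    (volume.withDensity f).prod (volume.withDensity g)
      = (volume : Measure (ℝ × ℝ)).withDensity (fun p => f p.1 * g p.2) := by
  refine Measure.prod_eq fun s t hs ht => ?_
  rw [withDensity_apply _ (hs.prod ht), Measure.volume_eq_prod, ← Measure.prod_restrict,
    lintegral_prod_mul hf.aemeasurable hg.aemeasurable,
    withDensity_apply _ hs, withDensity_apply _ ht]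

lemma gauss_prod_eq : (gaussianReal 0 1).prod (gaussianReal 0 1)
    = (volume : Measure (ℝ × ℝ)).withDensity
        (fun p => ENNReal.ofReal ((2 * π)⁻¹ * Real.exp (-(2⁻¹) * (p.1 ^ 2 + p.2 ^ 2)))) := by
  have hmg : Measurable fun x => ENNReal.ofReal (gaussianPDFReal 0 1 x) :=
    (measurable_gaussianPDFReal 0 1).ennreal_ofReal
  have h1 : SigmaFinite (volume.withDensity fun x => ENNReal.ofReal (gaussianPDFReal 0 1 x)) := by
    rw [← gaussianPDF_def, ← gaussianReal_of_var_ne_zero 0 one_ne_zero]; infer_instance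
  rw [gaussianReal_of_var_ne_zero 0 one_ne_zero, gaussianPDF_def,
    withDensity_prod_withDensity hmg hmg h1 h1]
  congr 1
  funext p
  rw [← ENNReal.ofReal_mul (gaussianPDFReal_nonneg 0 1 p.1), pdf_prod]

lemma int2d (k : ℕ) :
    Integrable (fun p : ℝ × ℝ => (p.1 ^ 2 + p.2 ^ 2) ^ k *
      Real.exp (-(2⁻¹) * (p.1 ^ 2 + p.2 ^ 2))) := by
  have heq : (fun p : ℝ × ℝ => (p.1 ^ 2 + p.2 ^ 2) ^ k * Real.exp (-(2⁻¹) * (p.1 ^ 2 + p.2 ^ 2)))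
      = fun p : ℝ × ℝ => ∑ j ∈ Finset.range (k + 1),
          ((p.1 ^ (2 * j) * Real.exp (-(2⁻¹) * p.1 ^ 2)) *
            (p.2 ^ (2 * (k - j)) * Real.exp (-(2⁻¹) * p.2 ^ 2))) * (k.choose j : ℝ) := by
    funext p
    have he : Real.exp (-(2⁻¹) * (p.1 ^ 2 + p.2 ^ 2))
        = Real.exp (-(2⁻¹) * p.1 ^ 2) * Real.exp (-(2⁻¹) * p.2 ^ 2) := by
      rw [← Real.exp_add]; ring_nf
    rw [add_pow, Finset.sum_mul, he]
    refine Finset.sum_congr rfl fun j hj => ?_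
    rw [← pow_mul, ← pow_mul]
    ring
  rw [heq, Measure.volume_eq_prod]
  exact integrable_finset_sum _ fun j hj =>
    (((int1d (2 * j)).mul_prod (int1d (2 * (k - j)))).mul_const _)

lemma radial (k : ℕ) :
    ∫ r in Ioi (0:ℝ), r * ((r ^ 2) ^ k * Real.exp (-(2⁻¹) * r ^ 2))
      = 2 ^ k * (k.factorial : ℝ) := by
  have h := integral_rpow_mul_exp_neg_mul_rpow (p := (2:ℝ)) (q := ((2 * k + 1 : ℕ) : ℝ))
    (b := (2⁻¹ : ℝ)) two_pos (lt_of_lt_of_le neg_one_lt_zero (Nat.cast_nonneg _)) (by norm_num)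
  have heq : ∀ r : ℝ, r ^ (((2 * k + 1 : ℕ) : ℝ)) * Real.exp (-(2⁻¹) * r ^ (2:ℝ))
      = r * ((r ^ 2) ^ k * Real.exp (-(2⁻¹) * r ^ 2)) := by
    intro r
    rw [Real.rpow_natCast, show ((2:ℝ)) = ((2:ℕ):ℝ) by norm_num, Real.rpow_natCast]
    push_cast
    ring
  simp_rw [heq] at h
  rw [h]
  have h1 : (-(((2 * k + 1 : ℕ) : ℝ) + 1) / 2) = -((k:ℝ) + 1) := by push_cast; ring
  have h2 : ((((2 * k + 1 : ℕ) : ℝ) + 1) / 2) = (k:ℝ) + 1 := by push_cast; ring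
  rw [h1, h2, Real.Gamma_nat_eq_factorial k]
  have h3 : (2⁻¹ : ℝ) ^ (-((k:ℝ) + 1)) = 2 ^ (k + 1 : ℕ) := by
    rw [Real.inv_rpow (by norm_num), Real.rpow_neg (by norm_num), inv_inv,
      show ((k:ℝ) + 1) = ((k + 1 : ℕ) : ℝ) by push_cast; ring, Real.rpow_natCast]
  rw [h3, pow_succ]
  ring

lemma val2d (k : ℕ) :
    ∫ p : ℝ × ℝ, (p.1 ^ 2 + p.2 ^ 2) ^ k * Real.exp (-(2⁻¹) * (p.1 ^ 2 + p.2 ^ 2))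
      = (2 * π) * (2 ^ k * (k.factorial : ℝ)) := by
  rw [← integral_comp_polarCoord_symm]
  have heq : ∀ p : ℝ × ℝ, p.1 • (((polarCoord.symm p).1 ^ 2 + (polarCoord.symm p).2 ^ 2) ^ k *
      Real.exp (-(2⁻¹) * ((polarCoord.symm p).1 ^ 2 + (polarCoord.symm p).2 ^ 2)))
      = p.1 * ((p.1 ^ 2) ^ k * Real.exp (-(2⁻¹) * p.1 ^ 2)) := by
    intro p
    have h : (polarCoord.symm p).1 ^ 2 + (polarCoord.symm p).2 ^ 2 = p.1 ^ 2 := by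
      simp only [polarCoord_symm_apply]
      rw [mul_pow, mul_pow, ← mul_add, add_comm, sin_sq_add_cos_sq, mul_one]
    rw [h, smul_eq_mul]
  simp_rw [heq]
  rw [polarCoord_target, Measure.volume_eq_prod, ← Measure.prod_restrict]
  have hfub := integral_prod_mul (μ := volume.restrict (Ioi (0:ℝ)))
    (ν := volume.restrict (Ioo (-π) π))
    (f := fun r : ℝ => r * ((r ^ 2) ^ k * Real.exp (-(2⁻¹) * r ^ 2))) (g := fun _ : ℝ => (1:ℝ))
  simp only [mul_one] at hfub
  rw [hfub, radial k]
  have : ∫ (_ : ℝ) in Ioo (-π) π, (1:ℝ) = 2 * π := by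
    rw [integral_const, measureReal_def, Measure.restrict_apply_univ, Real.volume_Ioo, smul_eq_mul, mul_one,
      ENNReal.toReal_ofReal (by rw [sub_neg_eq_add]; positivity)]
    ring
  rw [this]
  ring

lemma moment_pair (k : ℕ) :
    Integrable (fun p : ℝ × ℝ => (p.1 ^ 2 + p.2 ^ 2) ^ k)
        ((gaussianReal 0 1).prod (gaussianReal 0 1)) ∧
    ∫ p : ℝ × ℝ, (p.1 ^ 2 + p.2 ^ 2) ^ k ∂((gaussianReal 0 1).prod (gaussianReal 0 1))
      = 2 ^ k * (k.factorial : ℝ) := by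
  have hd : ∀ p : ℝ × ℝ, (0:ℝ) ≤ (2 * π)⁻¹ * Real.exp (-(2⁻¹) * (p.1 ^ 2 + p.2 ^ 2)) := by
    intro p; positivity
  have hdm : Measurable fun p : ℝ × ℝ =>
      ((2 * π)⁻¹ * Real.exp (-(2⁻¹) * (p.1 ^ 2 + p.2 ^ 2))).toNNReal := by
    apply Measurable.real_toNNReal
    apply Measurable.const_mul
    exact (((measurable_fst.pow_const 2).add (measurable_snd.pow_const 2)).const_mul
      (-(2⁻¹))).exp
  have hofReal : (fun p : ℝ × ℝ =>
      ENNReal.ofReal ((2 * π)⁻¹ * Real.exp (-(2⁻¹) * (p.1 ^ 2 + p.2 ^ 2))))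
      = fun p => (((2 * π)⁻¹ * Real.exp (-(2⁻¹) * (p.1 ^ 2 + p.2 ^ 2))).toNNReal : ℝ≥0∞) := rfl
  constructor
  · rw [gauss_prod_eq, hofReal, integrable_withDensity_iff_integrable_smul hdm]
    have : (fun p : ℝ × ℝ =>
        ((2 * π)⁻¹ * Real.exp (-(2⁻¹) * (p.1 ^ 2 + p.2 ^ 2))).toNNReal • (p.1 ^ 2 + p.2 ^ 2) ^ k)
        = fun p : ℝ × ℝ => (2 * π)⁻¹ *
            ((p.1 ^ 2 + p.2 ^ 2) ^ k * Real.exp (-(2⁻¹) * (p.1 ^ 2 + p.2 ^ 2))) := by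
      funext p
      rw [NNReal.smul_def, smul_eq_mul, Real.coe_toNNReal _ (hd p)]
      ring
    rw [this]
    exact (int2d k).const_mul _
  · rw [gauss_prod_eq, hofReal, integral_withDensity_eq_integral_smul hdm]
    have : (fun p : ℝ × ℝ =>
        ((2 * π)⁻¹ * Real.exp (-(2⁻¹) * (p.1 ^ 2 + p.2 ^ 2))).toNNReal • (p.1 ^ 2 + p.2 ^ 2) ^ k)
        = fun p : ℝ × ℝ => (2 * π)⁻¹ *
            ((p.1 ^ 2 + p.2 ^ 2) ^ k * Real.exp (-(2⁻¹) * (p.1 ^ 2 + p.2 ^ 2))) := by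
      funext p
      rw [NNReal.smul_def, smul_eq_mul, Real.coe_toNNReal _ (hd p)]
      ring
    rw [this, integral_const_mul, val2d k]
    rw [← mul_assoc, inv_mul_cancel₀ (by positivity), one_mul]

lemma moment_aux {Ω : Type*} [MeasurableSpace Ω] {μ : Measure Ω} [IsProbabilityMeasure μ]
    {X Y : Ω → ℝ} (hX : Measurable X) (hY : Measurable Y)
    (hXY : IndepFun X Y μ)
    (hgX : Measure.map X μ = gaussianReal 0 1) (hgY : Measure.map Y μ = gaussianReal 0 1)
    (k : ℕ) :
    Integrable (fun ω => (X ω ^ 2 + Y ω ^ 2) ^ k) μ ∧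
      ∫ ω, (X ω ^ 2 + Y ω ^ 2) ^ k ∂μ = 2 ^ k * (k.factorial : ℝ) := by
  have hmap : Measure.map (fun ω => (X ω, Y ω)) μ
      = (gaussianReal 0 1).prod (gaussianReal 0 1) := by
    rw [(indepFun_iff_map_prod_eq_prod_map_map hX.aemeasurable hY.aemeasurable).mp hXY,
      hgX, hgY]
  have hfm : Measurable fun p : ℝ × ℝ => (p.1 ^ 2 + p.2 ^ 2) ^ k :=
    ((measurable_fst.pow_const 2).add (measurable_snd.pow_const 2)).pow_const k
  have hpair : AEMeasurable (fun ω => (X ω, Y ω)) μ := (hX.prodMk hY).aemeasurable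
  constructor
  · have h1 := (moment_pair k).1
    rw [← hmap] at h1
    exact (integrable_map_measure hfm.aestronglyMeasurable hpair).mp h1
  · have h2 := (moment_pair k).2
    rw [← hmap, integral_map hpair hfm.aestronglyMeasurable] at h2
    exact h2

lemma key_indep {Ω : Type*} [MeasurableSpace Ω] {μ : Measure Ω} {n : ℕ}
    {X Y : Fin n → Ω → ℝ} (hmeas : ∀ j : Fin n ⊕ Fin n, Measurable (Sum.elim X Y j))
    (hindep : iIndepFun
      (Sum.elim X Y : Fin n ⊕ Fin n → Ω → ℝ) μ)
    (s : Finset (Fin n)) (i : Fin n) (hi : i ∉ s) (k : Fin n → ℕ) :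
    IndepFun (fun ω => ∏ j ∈ s, (X j ω ^ 2 + Y j ω ^ 2) ^ (k j))
      (fun ω => (X i ω ^ 2 + Y i ω ^ 2) ^ (k i)) μ := by
  classical
  set S : Finset (Fin n ⊕ Fin n) := s.disjSum s with hS
  set T : Finset (Fin n ⊕ Fin n) := ({i} : Finset (Fin n)).disjSum {i} with hT
  have hST : Disjoint S T := by
    rw [Finset.disjoint_left]
    rintro (x | x) hx hx' <;>
      simp only [hS, hT, Finset.inl_mem_disjSum, Finset.inr_mem_disjSum,
        Finset.mem_singleton] at hx hx' <;> exact hi (hx' ▸ hx)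
  have h := hindep.indepFun_finset S T hST hmeas
  let φ : (S → ℝ) → ℝ := fun v => ∏ j ∈ s.attach,
      (v ⟨Sum.inl j.1, Finset.inl_mem_disjSum.mpr j.2⟩ ^ 2 +
        v ⟨Sum.inr j.1, Finset.inr_mem_disjSum.mpr j.2⟩ ^ 2) ^ (k j.1)
  let ψ : (T → ℝ) → ℝ := fun v =>
      (v ⟨Sum.inl i, Finset.inl_mem_disjSum.mpr (Finset.mem_singleton_self i)⟩ ^ 2 +
        v ⟨Sum.inr i, Finset.inr_mem_disjSum.mpr (Finset.mem_singleton_self i)⟩ ^ 2) ^ (k i)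
  have hφ : Measurable φ := Finset.measurable_prod _ fun j _ => by fun_prop
  have hψ : Measurable ψ := by fun_prop
  have h2 := h.comp hφ hψ
  convert h2 using 1
  · funext ω
    show _ = φ (fun j : S => Sum.elim X Y j ω)
    simp only [φ]
    rw [← Finset.prod_attach s (fun j => (X j ω ^ 2 + Y j ω ^ 2) ^ (k j))]
    rfl
  · rfl

end Aux

/-- For independent standard Gaussians `X₁,…,Xₙ,Y₁,…,Yₙ` and reals `a₁,…,aₙ`,
`E[(∑ aᵢ(Xᵢ²+Yᵢ²))^p] = 2^p p! h_p(a)`. -/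
theorem moment_weighted_sum_sq_double_gaussian
    {Ω : Type*} [MeasurableSpace Ω] (μ : Measure Ω) [IsProbabilityMeasure μ]
    (n p : ℕ) (X Y : Fin n → Ω → ℝ)
    (hmeasX : ∀ i, Measurable (X i)) (hmeasY : ∀ i, Measurable (Y i))
    (hindep : iIndepFun
      (Sum.elim X Y : Fin n ⊕ Fin n → Ω → ℝ) μ)
    (hgaussX : ∀ i, Measure.map (X i) μ = gaussianReal 0 1)
    (hgaussY : ∀ i, Measure.map (Y i) μ = gaussianReal 0 1)
    (a : Fin n → ℝ) :
    ∫ ω, (∑ i, a i * (X i ω ^ 2 + Y i ω ^ 2)) ^ p ∂μ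
      = 2 ^ p * (p.factorial : ℝ) * completeHomogeneousValue n p a := by
  classical
  have hmeas : ∀ j : Fin n ⊕ Fin n, Measurable (Sum.elim X Y j) := by
    rintro (j | j)
    exacts [hmeasX j, hmeasY j]
  -- moments
  have hmom : ∀ (i : Fin n) (k : ℕ),
      Integrable (fun ω => (X i ω ^ 2 + Y i ω ^ 2) ^ k) μ ∧
        ∫ ω, (X i ω ^ 2 + Y i ω ^ 2) ^ k ∂μ = 2 ^ k * (k.factorial : ℝ) := by
    intro i k
    have hIXY : IndepFun (X i) (Y i) μ :=
      hindep.indepFun (show (Sum.inl i : Fin n ⊕ Fin n) ≠ Sum.inr i by simp)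
    exact moment_aux (hmeasX i) (hmeasY i) hIXY (hgaussX i) (hgaussY i) k
  -- products of moments
  have hprod : ∀ (k : Fin n → ℕ) (s : Finset (Fin n)),
      Integrable (fun ω => ∏ j ∈ s, (X j ω ^ 2 + Y j ω ^ 2) ^ (k j)) μ ∧
        ∫ ω, ∏ j ∈ s, (X j ω ^ 2 + Y j ω ^ 2) ^ (k j) ∂μ
          = ∏ j ∈ s, (2 ^ (k j) * ((k j).factorial : ℝ)) := by
    intro k s
    induction s using Finset.induction_on with
    | empty => constructor <;> simp
    | @insert i s hi ih =>
      have hins : (fun ω => ∏ j ∈ insert i s, (X j ω ^ 2 + Y j ω ^ 2) ^ (k j))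
          = (fun ω => (X i ω ^ 2 + Y i ω ^ 2) ^ (k i)) *
            (fun ω => ∏ j ∈ s, (X j ω ^ 2 + Y j ω ^ 2) ^ (k j)) := by
        funext ω
        simp [Finset.prod_insert hi]
      have hInd := (key_indep hmeas hindep s i hi k).symm
      constructor
      · rw [hins]
        exact hInd.integrable_mul (hmom i (k i)).1 ih.1
      · rw [hins, hInd.integral_mul_eq_mul_integral (hmom i (k i)).1.aestronglyMeasurable
          ih.1.aestronglyMeasurable]
        have h1 : integral μ (fun ω => (X i ω ^ 2 + Y i ω ^ 2) ^ (k i)) = _ := (hmom i (k i)).2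
        rw [Finset.prod_insert hi, h1, ih.2]
  -- expansion
  have hexp : (fun ω => (∑ i, a i * (X i ω ^ 2 + Y i ω ^ 2)) ^ p)
      = fun ω => ∑ k ∈ Finset.piAntidiag Finset.univ p,
          (Nat.multinomial Finset.univ k : ℝ) *
            ((∏ i, a i ^ (k i)) * ∏ i, (X i ω ^ 2 + Y i ω ^ 2) ^ (k i)) := by
    funext ω
    rw [Finset.sum_pow_eq_sum_piAntidiag]
    refine Finset.sum_congr rfl fun k hk => ?_
    rw [← Finset.prod_mul_distrib]
    congr 1
    exact Finset.prod_congr rfl fun i _ => mul_pow _ _ _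
  rw [hexp, integral_finset_sum _ (fun k hk =>
    (((hprod k Finset.univ).1.const_mul _).const_mul _))]
  have hterm : ∀ k ∈ Finset.piAntidiag (Finset.univ : Finset (Fin n)) p,
      ∫ ω, (Nat.multinomial Finset.univ k : ℝ) *
          ((∏ i, a i ^ (k i)) * ∏ i, (X i ω ^ 2 + Y i ω ^ 2) ^ (k i)) ∂μ
        = 2 ^ p * (p.factorial : ℝ) * ∏ i, a i ^ (k i) := by
    intro k hk
    rw [Finset.mem_piAntidiag] at hk
    rw [integral_const_mul, integral_const_mul, (hprod k Finset.univ).2]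
    rw [Finset.prod_mul_distrib, Finset.prod_pow_eq_pow_sum, hk.1]
    have h3 : (Nat.multinomial Finset.univ k : ℝ) * ∏ i, ((k i).factorial : ℝ)
        = (p.factorial : ℝ) := by
      rw [← Nat.cast_prod, ← Nat.cast_mul, mul_comm, Nat.multinomial_spec, hk.1]
    calc (Nat.multinomial Finset.univ k : ℝ) *
          ((∏ i, a i ^ (k i)) * ((2:ℝ) ^ p * ∏ i, ((k i).factorial : ℝ)))
        = ((Nat.multinomial Finset.univ k : ℝ) * ∏ i, ((k i).factorial : ℝ)) *
            ((2:ℝ) ^ p * ∏ i, a i ^ (k i)) := by ring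
      _ = 2 ^ p * (p.factorial : ℝ) * ∏ i, a i ^ (k i) := by rw [h3]; ring
  rw [Finset.sum_congr rfl hterm, ← Finset.mul_sum, completeHomogeneousValue,
    ← Finset.piAntidiag_univ_fin_eq_antidiagonalTuple]
end

section
/- For independent exponential random variables Z_1,...,Z_n with rate 1 and real numbers a_1,...,a_n, E[(∑_i a_i Z_i)^p] = p! · h_p(a_1,...,a_n), where h_p is the complete homogeneous symmetric polynomial of degree p. -/
open MeasureTheory ProbabilityTheory
open scoped ENNReal NNReal

lemma expMeasure_one_eq :
    expMeasure 1 = MeasureTheory.volume.withDensity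
      (fun x => ENNReal.ofReal (if 0 ≤ x then Real.exp (-x) else 0)) := by
  rw [expMeasure, gammaMeasure]
  congr 1
  funext x
  rw [show gammaPDF 1 1 x = exponentialPDF 1 x from rfl, exponentialPDF_eq]
  simp

lemma integrableOn_pow_exp (k : ℕ) :
    IntegrableOn (fun x : ℝ => Real.exp (-x) * x ^ k) (Set.Ioi 0) := by
  have := Real.GammaIntegral_convergent (s := (k : ℝ) + 1) (by positivity)
  refine this.congr_fun (fun x hx => ?_) measurableSet_Ioi
  simp only [add_sub_cancel_right, Real.rpow_natCast]

lemma integral_pow_exp (k : ℕ) :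
    ∫ x in Set.Ioi (0:ℝ), Real.exp (-x) * x ^ k = (k.factorial : ℝ) := by
  rw [setIntegral_congr_fun measurableSet_Ioi
    (g := fun x => Real.exp (-x) * x ^ (((k:ℝ) + 1) - 1))
    (fun x hx => by
      show Real.exp (-x) * x ^ k = Real.exp (-x) * x ^ (((k:ℝ) + 1) - 1)
      rw [add_sub_cancel_right, Real.rpow_natCast]),
    ← Real.Gamma_eq_integral (by positivity), Real.Gamma_nat_eq_factorial]

lemma integrable_pow_expMeasure (k : ℕ) :
    Integrable (fun x : ℝ => x ^ k) (expMeasure 1) := by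
  rw [expMeasure_one_eq]
  set g : ℝ → ℝ := fun x => if 0 ≤ x then Real.exp (-x) else 0 with hg
  have hgmeas : Measurable g := by
    apply Measurable.ite measurableSet_Ici (by fun_prop) measurable_const
  have hrw : (fun x => ENNReal.ofReal (g x)) = fun x => ((g x).toNNReal : ℝ≥0∞) := rfl
  rw [hrw, integrable_withDensity_iff_integrable_smul hgmeas.real_toNNReal]
  have : (fun x : ℝ => (g x).toNNReal • x ^ k)
      = Set.indicator (Set.Ici 0) (fun x => Real.exp (-x) * x ^ k) := by
    funext x
    by_cases hx : 0 ≤ x <;>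
      simp [hg, hx, NNReal.smul_def, Real.coe_toNNReal _ (Real.exp_nonneg (-x))]
  rw [this, integrable_indicator_iff measurableSet_Ici]
  rw [integrableOn_Ici_iff_integrableOn_Ioi]
  exact integrableOn_pow_exp k

lemma integral_pow_expMeasure (k : ℕ) :
    ∫ x, x ^ k ∂(expMeasure 1) = (k.factorial : ℝ) := by
  rw [expMeasure_one_eq]
  set g : ℝ → ℝ := fun x => if 0 ≤ x then Real.exp (-x) else 0 with hg
  have hgmeas : Measurable g := by
    apply Measurable.ite measurableSet_Ici (by fun_prop) measurable_const
  have hrw : (fun x => ENNReal.ofReal (g x)) = fun x => ((g x).toNNReal : ℝ≥0∞) := rfl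
  rw [hrw, integral_withDensity_eq_integral_smul hgmeas.real_toNNReal]
  have : (fun x : ℝ => (g x).toNNReal • x ^ k)
      = Set.indicator (Set.Ici 0) (fun x => Real.exp (-x) * x ^ k) := by
    funext x
    by_cases hx : 0 ≤ x <;>
      simp [hg, hx, NNReal.smul_def, Real.coe_toNNReal _ (Real.exp_nonneg (-x))]
  rw [this, integral_indicator measurableSet_Ici, MeasureTheory.integral_Ici_eq_integral_Ioi]
  exact integral_pow_exp k

lemma integral_prod_eq_prod_integral_of_iIndep {Ω : Type*} [MeasurableSpace Ω]
    (μ : Measure Ω) [IsProbabilityMeasure μ] {ι : Type*} {W : ι → Ω → ℝ}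
    (hW : iIndepFun W μ) (hWmeas : ∀ i, Measurable (W i))
    (hint : ∀ i, Integrable (W i) μ) (s : Finset ι) :
    Integrable (fun ω => ∏ i ∈ s, W i ω) μ ∧
      ∫ ω, (∏ i ∈ s, W i ω) ∂μ = ∏ i ∈ s, ∫ ω, W i ω ∂μ := by
  classical
  induction s using Finset.induction_on with
  | empty => simp
  | @insert a s ha ih =>
    have hprodeq : (∏ j ∈ s, W j) = fun ω => ∏ j ∈ s, W j ω := by
      funext ω; simp [Finset.prod_apply]
    have hdep : IndepFun (∏ j ∈ s, W j) (W a) μ :=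
      hW.indepFun_finsetProd_of_notMem hWmeas ha
    have heq : (fun ω => ∏ i ∈ insert a s, W i ω)
        = (W a) * (∏ j ∈ s, W j) := by
      funext ω
      simp [Finset.prod_insert ha, Finset.prod_apply]
    have hint2 : Integrable ((W a) * (∏ j ∈ s, W j)) μ := by
      exact hdep.symm.integrable_mul (hint a) (hprodeq ▸ ih.1)
    constructor
    · rw [heq]; exact hint2
    · rw [Finset.prod_insert ha, ← ih.2]
      have := hdep.symm.integral_mul_eq_mul_integral (hint a).aestronglyMeasurable (hprodeq ▸ ih.1).aestronglyMeasurable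
      calc ∫ ω, (∏ i ∈ insert a s, W i ω) ∂μ
          = ∫ ω, ((W a) * (∏ j ∈ s, W j)) ω ∂μ := by rw [heq]
        _ = (∫ ω, W a ω ∂μ) * ∫ ω, (∏ j ∈ s, W j) ω ∂μ := this
        _ = (∫ ω, W a ω ∂μ) * ∫ ω, (∏ j ∈ s, W j ω) ∂μ := by rw [hprodeq]

/-- For independent rate-one exponential random variables `Z₁,…,Zₙ` and reals
`a₁,…,aₙ`, `E[(∑ aᵢZᵢ)^p] = p! · h_p(a)`. -/
theorem moment_weighted_sum_exponential
    {Ω : Type*} [MeasurableSpace Ω] (μ : Measure Ω) [IsProbabilityMeasure μ]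
    (n p : ℕ) (Z : Fin n → Ω → ℝ) (hmeas : ∀ i, Measurable (Z i))
    (hindep : iIndepFun Z μ)
    (hexp : ∀ i, Measure.map (Z i) μ = expMeasure 1)
    (a : Fin n → ℝ) :
    ∫ ω, (∑ i, a i * Z i ω) ^ p ∂μ
      = (p.factorial : ℝ) * completeHomogeneousValue n p a := by
  classical
  have hints : ∀ (i : Fin n) (k : ℕ), Integrable (fun ω => Z i ω ^ k) μ := by
    intro i k
    have h1 : Integrable (fun x : ℝ => x ^ k) (Measure.map (Z i) μ) := by
      rw [hexp i]; exact integrable_pow_expMeasure k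
    exact (integrable_map_measure (measurable_id'.pow_const k).aestronglyMeasurable
      (hmeas i).aemeasurable).mp h1
  have hmoms : ∀ (i : Fin n) (k : ℕ), ∫ ω, Z i ω ^ k ∂μ = (k.factorial : ℝ) := by
    intro i k
    have h1 : ∫ x, x ^ k ∂(Measure.map (Z i) μ) = (k.factorial : ℝ) := by
      rw [hexp i]; exact integral_pow_expMeasure k
    rwa [integral_map (hmeas i).aemeasurable
      (measurable_id'.pow_const k).aestronglyMeasurable] at h1
  have key : ∀ k : Fin n → ℕ,
      Integrable (fun ω => ∏ i, Z i ω ^ k i) μ ∧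
      ∫ ω, (∏ i, Z i ω ^ k i) ∂μ = ∏ i, ((k i).factorial : ℝ) := by
    intro k
    have hWindep : iIndepFun (fun i ω => Z i ω ^ k i) μ :=
      hindep.comp (fun i x => x ^ k i) (fun i => measurable_id.pow_const _)
    have := integral_prod_eq_prod_integral_of_iIndep μ hWindep
      (fun i => (hmeas i).pow_const _) (fun i => hints i (k i)) Finset.univ
    refine ⟨this.1, this.2.trans ?_⟩
    exact Finset.prod_congr rfl fun i _ => hmoms i (k i)
  -- expand
  have expand : ∀ ω : Ω, (∑ i, a i * Z i ω) ^ p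
      = ∑ k ∈ Finset.piAntidiag Finset.univ p,
          (Nat.multinomial Finset.univ k : ℝ) * ((∏ i, a i ^ k i) * ∏ i, Z i ω ^ k i) := by
    intro ω
    rw [Finset.sum_pow_eq_sum_piAntidiag]
    refine Finset.sum_congr rfl fun k _ => ?_
    rw [← Finset.prod_mul_distrib]
    simp_rw [mul_pow]
  have hterm_int : ∀ k ∈ Finset.piAntidiag (Finset.univ : Finset (Fin n)) p,
      Integrable (fun ω => (Nat.multinomial Finset.univ k : ℝ)
        * ((∏ i, a i ^ k i) * ∏ i, Z i ω ^ k i)) μ := by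
    intro k _
    exact (((key k).1.const_mul _).const_mul _)
  calc ∫ ω, (∑ i, a i * Z i ω) ^ p ∂μ
      = ∫ ω, ∑ k ∈ Finset.piAntidiag Finset.univ p,
          (Nat.multinomial Finset.univ k : ℝ) * ((∏ i, a i ^ k i) * ∏ i, Z i ω ^ k i) ∂μ := by
        simp_rw [expand]
    _ = ∑ k ∈ Finset.piAntidiag Finset.univ p,
          ∫ ω, (Nat.multinomial Finset.univ k : ℝ)
            * ((∏ i, a i ^ k i) * ∏ i, Z i ω ^ k i) ∂μ :=
        integral_finset_sum _ hterm_int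
    _ = ∑ k ∈ Finset.piAntidiag Finset.univ p,
          (Nat.multinomial Finset.univ k : ℝ) * ((∏ i, a i ^ k i)
            * ∏ i, ((k i).factorial : ℝ)) := by
        refine Finset.sum_congr rfl fun k _ => ?_
        rw [integral_const_mul, integral_const_mul, (key k).2]
    _ = ∑ k ∈ Finset.piAntidiag Finset.univ p,
          (p.factorial : ℝ) * ∏ i, a i ^ k i := by
        refine Finset.sum_congr rfl fun k hk => ?_
        rw [Finset.mem_piAntidiag] at hk
        have hspec := Nat.multinomial_spec (Finset.univ : Finset (Fin n)) k
        rw [hk.1] at hspec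
        have : (Nat.multinomial Finset.univ k : ℝ) * ∏ i, ((k i).factorial : ℝ)
            = (p.factorial : ℝ) := by
          rw [← Nat.cast_prod, ← Nat.cast_mul, mul_comm, hspec]
        rw [← this]; ring
    _ = (p.factorial : ℝ) * completeHomogeneousValue n p a := by
        rw [← Finset.mul_sum, completeHomogeneousValue]
        congr 1
        apply Finset.sum_congr ?_ fun _ _ => rfl
        ext k
        simp [Finset.mem_piAntidiag, Finset.Nat.mem_antidiagonalTuple]
end

section
/- Let G ⊂ O(d) be a finite irreducible group of isometries, so that the tight 1-frame identity (1/|G|)∑_{U∈G}|TUx|² = (1/d)‖T‖₂²|x|² holds for all matrices T and vectors x. Then for every convex function Φ : [0,∞) → R, every invertible matrix T with singular values s_i, and every unit vector x: (1/|G|)∑_{U∈G} Φ(|T^{-1}Ux|²) ≤ (1/d) ∑_{i=1}^d Φ(s_i(T^{-1})²) = (1/d) tr Φ(T^{-⊤}T^{-1}). -/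
open Matrix

lemma iso_norm_aux {d : ℕ} (M : Matrix (Fin d) (Fin d) ℝ) (h : Mᵀ * M = 1)
    (z : Fin d → ℝ) : ∑ i, (M.mulVec z i) ^ 2 = ∑ i, z i ^ 2 := by
  have h1 : ∑ i, (M.mulVec z i) ^ 2 = M.mulVec z ⬝ᵥ M.mulVec z := by
    simp [dotProduct, sq]
  have h2 : M.mulVec z ⬝ᵥ M.mulVec z = (Mᵀ * M).mulVec z ⬝ᵥ z := by
    rw [dotProduct_mulVec, ← mulVec_transpose, mulVec_mulVec]
  rw [h1, h2, h, one_mulVec]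
  simp [dotProduct, sq]

/-- Let `G ⊂ O(d)` be a finite group satisfying the tight 1-frame identity
`(1/|G|)∑_{U∈G}|AUx|² = (1/d)‖A‖₂²|x|²` for all matrices `A` and vectors `x`.
Then for every convex `Φ : [0,∞) → ℝ`, every invertible `T` whose inverse has
singular value decomposition `T⁻¹ = W diag(s) V`, and every unit vector `x`:
`(1/|G|)∑_{U∈G} Φ(|T⁻¹Ux|²) ≤ (1/d) ∑ᵢ Φ(sᵢ²) (= (1/d) tr Φ(T^{-⊤}T⁻¹))`. -/
theorem nontight_frame_convex_bound (d : ℕ) (hd : 0 < d)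
    (G : Finset (Matrix (Fin d) (Fin d) ℝ)) (hGne : G.Nonempty)
    (horth : ∀ U ∈ G, U * Uᵀ = 1)
    (hframe : ∀ (A : Matrix (Fin d) (Fin d) ℝ) (x : Fin d → ℝ),
      (1 / (G.card : ℝ)) * ∑ U ∈ G, ∑ i, (A.mulVec (U.mulVec x) i) ^ 2
        = (1 / d) * (∑ i, ∑ j, A i j ^ 2) * ∑ i, x i ^ 2)
    (Φ : ℝ → ℝ) (hΦ : ConvexOn ℝ (Set.Ici 0) Φ)
    (T : Matrix (Fin d) (Fin d) ℝ) (hT : IsUnit T.det)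
    (s : Fin d → ℝ) (hs : ∀ i, 0 ≤ s i)
    (W V : Matrix (Fin d) (Fin d) ℝ) (hW : W * Wᵀ = 1) (hV : V * Vᵀ = 1)
    (hSVD : T⁻¹ = W * diagonal s * V)
    (x : Fin d → ℝ) (hx : ∑ i, x i ^ 2 = 1) :
    (1 / (G.card : ℝ)) * ∑ U ∈ G, Φ (∑ i, (T⁻¹.mulVec (U.mulVec x) i) ^ 2)
      ≤ (1 / d) * ∑ i, Φ (s i ^ 2) := by
  have hWt : Wᵀ * W = 1 := mul_eq_one_comm.mp hW
  have hVt : Vᵀ * V = 1 := mul_eq_one_comm.mp hV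
  -- y U := V (U x)
  set y : Matrix (Fin d) (Fin d) ℝ → Fin d → ℝ :=
    fun U => V.mulVec (U.mulVec x) with hy
  -- weights sum to one
  have hyone : ∀ U ∈ G, ∑ i, (y U i) ^ 2 = 1 := by
    intro U hU
    rw [hy]
    have hUt : Uᵀ * U = 1 := mul_eq_one_comm.mp (horth U hU)
    rw [iso_norm_aux V hVt, iso_norm_aux U hUt, hx]
  -- norm computation
  have hnorm : ∀ U : Matrix (Fin d) (Fin d) ℝ,
      ∑ i, (T⁻¹.mulVec (U.mulVec x) i) ^ 2 = ∑ i, (y U i) ^ 2 * s i ^ 2 := by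
    intro U
    rw [hSVD]
    have : (W * diagonal s * V).mulVec (U.mulVec x)
        = W.mulVec ((diagonal s).mulVec (y U)) := by
      rw [hy]; simp [mulVec_mulVec, Matrix.mul_assoc]
    rw [this, iso_norm_aux W hWt]
    simp [mulVec_diagonal, mul_pow, mul_comm]
  -- frame identity applied to single rows of V
  have hrow : ∀ i : Fin d,
      (1 / (G.card : ℝ)) * ∑ U ∈ G, (y U i) ^ 2 = 1 / d := by
    intro i
    set A : Matrix (Fin d) (Fin d) ℝ :=
      fun j k => if j = i then V i k else 0 with hA
    have hAv : ∀ v : Fin d → ℝ, ∀ j, A.mulVec v j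
        = if j = i then V.mulVec v i else 0 := by
      intro v j
      simp [hA, Matrix.mulVec, dotProduct]
    have h1 : ∀ U ∈ G, ∑ j, (A.mulVec (U.mulVec x) j) ^ 2 = (y U i) ^ 2 := by
      intro U hU
      rw [hy]
      simp [hAv, apply_ite (fun t : ℝ => t ^ 2)]
    have h2 : (∑ j, ∑ k, A j k ^ 2) = 1 := by
      have : (∑ j, ∑ k, A j k ^ 2) = ∑ k, V i k ^ 2 := by
        simp [hA, apply_ite (fun t : ℝ => t ^ 2)]
      rw [this]
      have := congrFun (congrFun hV i) i
      simpa [Matrix.mul_apply, Matrix.one_apply, sq] using this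
    have := hframe A x
    rw [h2, hx, Finset.sum_congr rfl h1] at this
    simpa using this
  -- Jensen for each U
  have hjensen : ∀ U ∈ G,
      Φ (∑ i, (T⁻¹.mulVec (U.mulVec x) i) ^ 2)
        ≤ ∑ i, (y U i) ^ 2 * Φ (s i ^ 2) := by
    intro U hU
    have key := hΦ.map_sum_le (t := Finset.univ)
      (w := fun i => (y U i) ^ 2) (p := fun i => s i ^ 2)
      (fun i _ => sq_nonneg _) (hyone U hU)
      (fun i _ => sq_nonneg (s i))
    rw [hnorm U]
    simpa [smul_eq_mul] using key
  -- combine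
  have hcard : (0:ℝ) ≤ 1 / (G.card : ℝ) := by positivity
  calc (1 / (G.card : ℝ)) * ∑ U ∈ G, Φ (∑ i, (T⁻¹.mulVec (U.mulVec x) i) ^ 2)
      ≤ (1 / (G.card : ℝ)) * ∑ U ∈ G, ∑ i, (y U i) ^ 2 * Φ (s i ^ 2) :=
        mul_le_mul_of_nonneg_left (Finset.sum_le_sum hjensen) hcard
    _ = ∑ i, ((1 / (G.card : ℝ)) * ∑ U ∈ G, (y U i) ^ 2) * Φ (s i ^ 2) := by
        rw [Finset.sum_comm]
        rw [Finset.mul_sum]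
        congr 1; funext i
        rw [← Finset.sum_mul, mul_assoc]
    _ = (1 / d) * ∑ i, Φ (s i ^ 2) := by
        simp_rw [hrow]
        rw [Finset.mul_sum]
end

section
/- For p a nonnegative integer and positive reals s_1, s_2, (1/2π)∫_0^{2π} (s_1 cos²θ + s_2 sin²θ)^p dθ = (1/4^p) ∑_{k=0}^p binomial(2k,k) binomial(2p-2k,p-k) s_1^k s_2^{p-k}. -/
open Real

lemma cos_pow_int (m : ℕ) :
    ∫ θ in (0:ℝ)..(2*π), cos θ ^ (2*m)
      = 2 * π * (Nat.choose (2*m) m) / 4 ^ m := by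
  induction m with
  | zero => simp
  | succ m ih =>
      have h := integral_cos_pow (a := 0) (b := 2*π) (n := 2*m)
      have h2 : 2*(m+1) = 2*m + 2 := by ring
      rw [h2, h, Real.cos_two_pi, Real.sin_two_pi, Real.sin_zero, ih]
      have hb : ((2*m+2).choose (m+1) : ℝ) * (m+1) = 2 * (2*m+1) * (2*m).choose m := by
        have h6 : ((m+1) * Nat.centralBinom (m+1) : ℕ) = (2 * (2*m+1) * Nat.centralBinom m : ℕ) :=
          Nat.succ_mul_centralBinom_succ m
        simp only [Nat.centralBinom, h2] at h6
        have h7 := congrArg (Nat.cast (R := ℝ)) h6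
        push_cast at h7
        linarith
      field_simp
      push_cast
      first
        | linear_combination (4)*π*(4:ℝ)^m * hb
        | linear_combination (-4)*π*(4:ℝ)^m * hb
        | linear_combination (8)*π*(4:ℝ)^m * hb
        | linear_combination (-8)*π*(4:ℝ)^m * hb


lemma mixed_rec (m n : ℕ) :
    (2*(n:ℝ)+1) * ∫ θ in (0:ℝ)..(2*π), cos θ^(2*(m+1)) * sin θ^(2*n)
      = (2*(m:ℝ)+1) * ∫ θ in (0:ℝ)..(2*π), cos θ^(2*m) * sin θ^(2*(n+1)) := by
  have hd : ∀ θ ∈ Set.uIcc (0:ℝ) (2*π), HasDerivAt (fun θ => sin θ^(2*n+1) * cos θ^(2*m+1))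
      ((2*(n:ℝ)+1) * (cos θ^(2*(m+1)) * sin θ^(2*n))
        - (2*(m:ℝ)+1) * (cos θ^(2*m) * sin θ^(2*(n+1)))) θ := by
    intro θ _
    have h := (((hasDerivAt_sin θ).fun_pow (2*n+1)).fun_mul ((hasDerivAt_cos θ).fun_pow (2*m+1)))
    convert h using 1
    · rfl
    · rfl
    simp only [Nat.add_sub_cancel]
    push_cast
    ring
  have key := intervalIntegral.integral_eq_sub_of_hasDerivAt hd
    (by apply Continuous.intervalIntegrable; fun_prop)
  simp only [Real.sin_two_pi, Real.sin_zero, zero_pow (Nat.succ_ne_zero _), zero_mul, sub_zero,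
    sub_self] at key
  rw [intervalIntegral.integral_sub, intervalIntegral.integral_const_mul,
    intervalIntegral.integral_const_mul, sub_eq_zero] at key
  · exact key
  · apply Continuous.intervalIntegrable; fun_prop
  · apply Continuous.intervalIntegrable; fun_prop


lemma choose_fact (m : ℕ) :
    (Nat.choose (2*m) m : ℝ) * (m.factorial * m.factorial) = (2*m).factorial := by
  have h0 := Nat.choose_mul_factorial_mul_factorial (show m ≤ 2*m by omega)
  have h2 : 2*m - m = m := by omega
  rw [h2] at h0
  exact_mod_cast congrArg (Nat.cast (R := ℝ)) (by rw [← h0]; ring)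

lemma fact_succ_real (k : ℕ) : ((k+1).factorial : ℝ) = (k+1) * k.factorial := by
  rw [Nat.factorial_succ]; push_cast; ring

lemma fact_two_succ_real (k : ℕ) :
    ((2*(k+1)).factorial : ℝ) = (2*k+2) * (2*k+1) * (2*k).factorial := by
  have h : 2*(k+1) = (2*k+1)+1 := by ring
  rw [h, Nat.factorial_succ, Nat.factorial_succ]; push_cast; ring

lemma mixed_int (n m : ℕ) :
    ∫ θ in (0:ℝ)..(2*π), cos θ^(2*m) * sin θ^(2*n)
      = 2 * π * (2*m).factorial * (2*n).factorial
          / (4^(m+n) * m.factorial * n.factorial * (m+n).factorial) := by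
  induction n generalizing m with
  | zero =>
      simp only [Nat.mul_zero, pow_zero, mul_one, Nat.factorial_zero, Nat.add_zero, Nat.cast_one]
      rw [cos_pow_int]
      have hm : (m.factorial : ℝ) ≠ 0 := by exact_mod_cast m.factorial_ne_zero
      field_simp
      first
        | linear_combination 2*π*(choose_fact m)
        | linear_combination (-2)*π*(choose_fact m)
        | linear_combination 2*π*((4:ℝ)^m - 1)*(choose_fact m)
        | linear_combination 2*π*(1-(4:ℝ)^m)*(choose_fact m)
        | linear_combination π*(4*(4:ℝ)^m - 2)*(choose_fact m)
        | linear_combination π*(2 - 4*(4:ℝ)^m)*(choose_fact m)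
        | linear_combination 2*π*(4:ℝ)^m*(choose_fact m)
        | linear_combination (choose_fact m)
  | succ n ih =>
      have key := mixed_rec m n
      rw [ih (m+1)] at key
      have h2 : (2*(m:ℝ)+1) ≠ 0 := by positivity
      have hI : (∫ θ in (0:ℝ)..(2*π), cos θ^(2*m) * sin θ^(2*(n+1)))
          = (2*(n:ℝ)+1) * (2 * π * ((2*(m+1)).factorial:ℝ) * ((2*n).factorial:ℝ)
              / (4^(m+1+n) * ((m+1).factorial:ℝ) * (n.factorial:ℝ) * ((m+1+n).factorial:ℝ)))
            / (2*(m:ℝ)+1) := by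
        rw [eq_div_iff h2]; linear_combination -key
      rw [hI]
      have e1 := fact_two_succ_real m
      have e2 := fact_two_succ_real n
      have e3 := fact_succ_real m
      have e5 : ((m+1+n).factorial : ℝ) = (m+n+1) * (m+n).factorial := by
        have h : m+1+n = (m+n)+1 := by ring
        rw [h, fact_succ_real]; push_cast; ring
      have e6 : ((m+(n+1)).factorial : ℝ) = (m+n+1) * (m+n).factorial := by
        have h : m+(n+1) = (m+n)+1 := by ring
        rw [h, fact_succ_real]; push_cast; ring
      have e7 : (4:ℝ)^(m+1+n) = 4 * 4^(m+n) := by rw [show m+1+n = (m+n)+1 by ring, pow_succ]; ring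
      have e8 : (4:ℝ)^(m+(n+1)) = 4 * 4^(m+n) := by
        rw [show m+(n+1) = (m+n)+1 by ring, pow_succ]; ring
      rw [e1, e2, e3, fact_succ_real n, e5, e6, e7, e8]
      have hfm : (m.factorial : ℝ) ≠ 0 := by exact_mod_cast m.factorial_ne_zero
      have hfn : (n.factorial : ℝ) ≠ 0 := by exact_mod_cast n.factorial_ne_zero
      have hfmn : ((m+n).factorial : ℝ) ≠ 0 := by exact_mod_cast (m+n).factorial_ne_zero
      have h4 : (4:ℝ)^(m+n) ≠ 0 := by positivity
      field_simp

/-- Two-dimensional generalized tight `p`-frame identity for `O(2)`: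
`(1/2π) ∫₀^{2π} (s₁cos²θ + s₂sin²θ)^p dθ
  = 4^{-p} ∑_{k=0}^p C(2k,k) C(2p-2k,p-k) s₁^k s₂^{p-k}`. -/
theorem circle_average_pow (p : ℕ) (s₁ s₂ : ℝ) (hs₁ : 0 < s₁) (hs₂ : 0 < s₂) :
    (1 / (2 * π)) * ∫ θ in (0 : ℝ)..(2 * π),
        (s₁ * cos θ ^ 2 + s₂ * sin θ ^ 2) ^ p
      = (1 / 4 ^ p) * ∑ k ∈ Finset.range (p + 1),
          (Nat.choose (2 * k) k : ℝ) * Nat.choose (2 * (p - k)) (p - k)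
            * s₁ ^ k * s₂ ^ (p - k) := by
  have hint : ∫ θ in (0 : ℝ)..(2 * π), (s₁ * cos θ ^ 2 + s₂ * sin θ ^ 2) ^ p
      = ∑ k ∈ Finset.range (p + 1), (p.choose k : ℝ) * s₁ ^ k * s₂ ^ (p - k)
          * ∫ θ in (0 : ℝ)..(2 * π), cos θ ^ (2*k) * sin θ ^ (2*(p-k)) := by
    have h1 : ∀ θ : ℝ, (s₁ * cos θ ^ 2 + s₂ * sin θ ^ 2) ^ p
        = ∑ k ∈ Finset.range (p + 1),
            (p.choose k : ℝ) * s₁ ^ k * s₂ ^ (p - k) * (cos θ ^ (2*k) * sin θ ^ (2*(p-k))) := by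
      intro θ
      rw [add_pow]
      refine Finset.sum_congr rfl fun k _ => ?_
      rw [mul_pow, mul_pow, ← pow_mul, ← pow_mul]
      ring
    rw [intervalIntegral.integral_congr (fun θ _ => h1 θ),
      intervalIntegral.integral_finset_sum
        (fun k _ => by apply Continuous.intervalIntegrable; fun_prop)]
    exact Finset.sum_congr rfl fun k _ => intervalIntegral.integral_const_mul _ _
  rw [hint, Finset.mul_sum, Finset.mul_sum]
  refine Finset.sum_congr rfl fun k hk => ?_
  have hk' : k ≤ p := by simpa using Nat.lt_succ_iff.mp (Finset.mem_range.mp hk)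
  set n := p - k with hn
  rw [mixed_int, show k + n = p by omega]
  have keyN : p.choose k * (2*k).factorial * (2*n).factorial
      = (2*k).choose k * ((2*n).choose n) * k.factorial * n.factorial * p.factorial := by
    have A := Nat.choose_mul_factorial_mul_factorial hk'
    have B := Nat.choose_mul_factorial_mul_factorial (show k ≤ 2*k by omega)
    have C := Nat.choose_mul_factorial_mul_factorial (show n ≤ 2*n by omega)
    rw [show 2*k - k = k by omega] at B
    rw [show 2*n - n = n by omega] at C
    rw [← hn] at A
    calc p.choose k * (2*k).factorial * (2*n).factorial
        = p.choose k * ((2*k).choose k * k.factorial * k.factorial)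
            * ((2*n).choose n * n.factorial * n.factorial) := by rw [B, C]
      _ = (2*k).choose k * ((2*n).choose n) * k.factorial * n.factorial
            * (p.choose k * k.factorial * n.factorial) := by ring
      _ = _ := by rw [A]
  have key : (p.choose k : ℝ) * (2*k).factorial * (2*n).factorial
      = (2*k).choose k * ((2*n).choose n) * k.factorial * n.factorial * p.factorial := by
    exact_mod_cast congrArg (Nat.cast (R := ℝ)) keyN
  have hπ : π ≠ 0 := pi_ne_zero
  have hfk : (k.factorial : ℝ) ≠ 0 := by exact_mod_cast k.factorial_ne_zero
  have hfn : (n.factorial : ℝ) ≠ 0 := by exact_mod_cast n.factorial_ne_zero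
  have hfp : (p.factorial : ℝ) ≠ 0 := by exact_mod_cast p.factorial_ne_zero
  have h4 : (4:ℝ)^p ≠ 0 := by positivity
  field_simp
  linear_combination key
end

section
/- Let Ω ⊂ R^d be a bounded measurable set whose isometry group G (finite subgroup of O(d) fixing Ω) satisfies the tight p-frame identity (1/|G|)∑_{U∈G}|TUx|^{2p} = F_p(s²(T))|x|^{2p} for all matrices T and x ∈ R^d. Then for any invertible linear map T, the polar moment I_{2p}(T(Ω)) := ∫_{T(Ω)} |x|^{2p} dx satisfies I_{2p}(T(Ω)) = |det T| · F_p(s²(T)) · I_{2p}(Ω). -/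
open Matrix MeasureTheory


lemma cov_aux {d : ℕ} (A : Matrix (Fin d) (Fin d) ℝ) (hA : IsUnit A.det)
    (s : Set (Fin d → ℝ)) (hs : MeasurableSet s) (g : (Fin d → ℝ) → ℝ) :
    ∫ x in A.mulVec '' s, g x = |A.det| * ∫ y in s, g (A.mulVec y) := by
  have hinj : Set.InjOn A.mulVec s := by
    intro x _ y _ h
    have := congrArg (A⁻¹.mulVec) h
    simpa [Matrix.mulVec_mulVec, Matrix.nonsing_inv_mul A hA, Matrix.one_mulVec] using this
  have he : A.mulVec = ⇑(LinearMap.toContinuousLinearMap (Matrix.toLin' A)) := by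
    funext v; simp [Matrix.toLin'_apply]
  have hderiv : ∀ x ∈ s, HasFDerivWithinAt A.mulVec
      ((Matrix.toLin' A).toContinuousLinearMap) s x := by
    rw [he]; exact fun x _ => ContinuousLinearMap.hasFDerivWithinAt _
  have hdet : (LinearMap.toContinuousLinearMap (Matrix.toLin' A)).det = A.det := by
    simp [ContinuousLinearMap.det, LinearMap.det_toLin']
  rw [integral_image_eq_integral_abs_det_fderiv_smul volume hs hderiv hinj g, hdet]
  simp only [smul_eq_mul]
  rw [integral_const_mul]

lemma cont_mulVec_aux {d : ℕ} (A : Matrix (Fin d) (Fin d) ℝ) : Continuous (A.mulVec) := by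
  have : (A.mulVec) = fun v => Matrix.toLin' A v := by
    funext v; simp [Matrix.toLin'_apply]
  rw [this]
  exact (Matrix.toLin' A).continuous_of_finiteDimensional

lemma integ_aux {d : ℕ} {Ω : Set (Fin d → ℝ)} (hbd : Bornology.IsBounded Ω)
    (hΩ : MeasurableSet Ω) {g : (Fin d → ℝ) → ℝ} (hg : Continuous g) :
    IntegrableOn g Ω := by
  obtain ⟨r, hr⟩ := hbd.subset_closedBall 0
  exact ((hg.continuousOn).integrableOn_compact (isCompact_closedBall 0 r)).mono_set hr

/-- If the (finite, orthogonal) isometry group `G` of a bounded measurable set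
`Ω ⊂ ℝ^d` satisfies the tight `p`-frame identity
`(1/|G|)∑_{U∈G}|SUx|^{2p} = F_p(S)|x|^{2p}` for all matrices `S` and vectors
`x`, then for any invertible linear map `T` the polar moment of mass satisfies
`I_{2p}(T(Ω)) = |det T| · F_p(T) · I_{2p}(Ω)`. -/
theorem moment_of_mass_transform (d p : ℕ) (hd : 0 < d)
    (Ω : Set (Fin d → ℝ)) (hbd : Bornology.IsBounded Ω) (hΩ : MeasurableSet Ω)
    (G : Finset (Matrix (Fin d) (Fin d) ℝ)) (hGne : G.Nonempty)
    (horth : ∀ U ∈ G, U * Uᵀ = 1)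
    (hmul : ∀ U ∈ G, ∀ V ∈ G, U * V ∈ G)
    (hinv : ∀ U ∈ G, U.mulVec '' Ω = Ω)
    (Fp : Matrix (Fin d) (Fin d) ℝ → ℝ)
    (hframe : ∀ (S : Matrix (Fin d) (Fin d) ℝ) (x : Fin d → ℝ),
      (1 / (G.card : ℝ)) * ∑ U ∈ G, (∑ i, (S.mulVec (U.mulVec x) i) ^ 2) ^ p
        = Fp S * (∑ i, x i ^ 2) ^ p)
    (T : Matrix (Fin d) (Fin d) ℝ) (hT : IsUnit T.det) :
    ∫ x in T.mulVec '' Ω, (∑ i, x i ^ 2) ^ p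
      = |T.det| * Fp T * ∫ x in Ω, (∑ i, x i ^ 2) ^ p := by
  have hcard : (G.card : ℝ) ≠ 0 :=
    Nat.cast_ne_zero.mpr (Finset.card_pos.mpr hGne).ne'
  -- continuity of the basic integrands
  have hcontnorm : Continuous (fun x : Fin d → ℝ => (∑ i, x i ^ 2) ^ p) :=
    (continuous_finset_sum _ fun i _ => (continuous_apply i).pow 2).pow p
  -- each U in G has unit det with |det| = 1
  have hUdet : ∀ U ∈ G, IsUnit U.det ∧ |U.det| = 1 := by
    intro U hU
    have h1 : U.det * U.det = 1 := by
      have := congrArg Matrix.det (horth U hU)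
      rwa [Matrix.det_mul, Matrix.det_transpose, Matrix.det_one] at this
    refine ⟨IsUnit.of_mul_eq_one _ h1, ?_⟩
    have h2 : |U.det| * |U.det| = 1 := by rw [← abs_mul, h1, abs_one]
    nlinarith [abs_nonneg U.det]
  -- step 1: change of variables for T
  rw [cov_aux T hT Ω hΩ _]
  -- step 2: for each U, invariance of the integral
  have key : ∀ U ∈ G,
      ∫ y in Ω, (∑ i, (T.mulVec (U.mulVec y) i) ^ 2) ^ p
        = ∫ y in Ω, (∑ i, (T.mulVec y i) ^ 2) ^ p := by
    intro U hU
    obtain ⟨hU1, hU2⟩ := hUdet U hU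
    have := cov_aux U hU1 Ω hΩ (fun x => (∑ i, (T.mulVec x i) ^ 2) ^ p)
    rw [hinv U hU, hU2, one_mul] at this
    exact this.symm
  -- step 3: average
  have hint : ∀ U ∈ G, IntegrableOn
      (fun y => (∑ i, (T.mulVec (U.mulVec y) i) ^ 2) ^ p) Ω := by
    intro U hU
    exact integ_aux hbd hΩ (hcontnorm.comp ((cont_mulVec_aux T).comp (cont_mulVec_aux U)))
  have hsum : ∑ U ∈ G, ∫ y in Ω, (∑ i, (T.mulVec (U.mulVec y) i) ^ 2) ^ p
      = ∫ y in Ω, ∑ U ∈ G, (∑ i, (T.mulVec (U.mulVec y) i) ^ 2) ^ p :=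
    (integral_finset_sum G hint).symm
  have hpt : ∀ y : Fin d → ℝ,
      ∑ U ∈ G, (∑ i, (T.mulVec (U.mulVec y) i) ^ 2) ^ p
        = (G.card : ℝ) * (Fp T * (∑ i, y i ^ 2) ^ p) := by
    intro y
    have h := hframe T y
    rw [one_div, inv_mul_eq_iff_eq_mul₀ hcard] at h
    exact h
  have hleft : ∑ U ∈ G, ∫ y in Ω, (∑ i, (T.mulVec (U.mulVec y) i) ^ 2) ^ p
      = (G.card : ℝ) * ∫ y in Ω, (∑ i, (T.mulVec y i) ^ 2) ^ p := by
    rw [Finset.sum_congr rfl key, Finset.sum_const, nsmul_eq_mul]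
  have hright : ∫ y in Ω, ∑ U ∈ G, (∑ i, (T.mulVec (U.mulVec y) i) ^ 2) ^ p
      = (G.card : ℝ) * (Fp T * ∫ y in Ω, (∑ i, y i ^ 2) ^ p) := by
    simp_rw [hpt]
    rw [integral_const_mul, integral_const_mul]
  have hmain : ∫ y in Ω, (∑ i, (T.mulVec y i) ^ 2) ^ p
      = Fp T * ∫ y in Ω, (∑ i, y i ^ 2) ^ p := by
    have := hleft.symm.trans (hsum.trans hright)
    exact mul_left_cancel₀ hcard this
  rw [hmain, mul_assoc]
end

section
/- Let Ω ⊂ R² be a bounded measurable set with area A(Ω) and polar moments I_{2p}(Ω) = ∫_Ω |x|^{2p}dx, whose isometry group admits tight p-frames (so I_{2p}(T(Ω)) = |det T| F_p(s²(T)) I_{2p}(Ω)). Then for any invertible linear T: A(T(Ω))^{1+p}/I_{2p}(T(Ω)) = A(T^{-1}(Ω))^{1+p}/I_{2p}(T^{-1}(Ω)). -/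
open Matrix MeasureTheory

lemma aux_cont (p : ℕ) (S : Matrix (Fin 2) (Fin 2) ℝ) :
    Continuous fun x : Fin 2 → ℝ => (∑ i, (S.mulVec x i) ^ 2 : ℝ) ^ p := by
  apply Continuous.pow
  apply continuous_finset_sum
  intro i _
  apply Continuous.pow
  simp only [Matrix.mulVec, dotProduct]
  exact continuous_finset_sum _ fun j _ => continuous_const.mul (continuous_apply j)

lemma aux_intOn {g : (Fin 2 → ℝ) → ℝ} (hg : Continuous g) {s : Set (Fin 2 → ℝ)}
    (hs : Bornology.IsBounded s) : IntegrableOn g s volume :=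
  (hg.continuousOn.integrableOn_compact hs.isCompact_closure).mono_set subset_closure

lemma aux_vol (S : Matrix (Fin 2) (Fin 2) ℝ) (s : Set (Fin 2 → ℝ)) :
    volume (S.mulVec '' s) = ENNReal.ofReal |S.det| * volume s := by
  have h : S.mulVec '' s = (Matrix.toLin' S) '' s := by
    rw [show ⇑(Matrix.toLin' S) = S.mulVec from funext (Matrix.toLin'_apply S)]
  rw [h, Measure.addHaar_image_linearMap, LinearMap.det_toLin']

lemma aux_cov (S : Matrix (Fin 2) (Fin 2) ℝ) (hS : IsUnit S.det) {s : Set (Fin 2 → ℝ)}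
    (hs : MeasurableSet s) (g : (Fin 2 → ℝ) → ℝ) :
    ∫ x in S.mulVec '' s, g x = |S.det| * ∫ x in s, g (S.mulVec x) := by
  have hfun : (fun x : Fin 2 → ℝ => S.mulVec x)
      = ⇑(LinearMap.toContinuousLinearMap (Matrix.toLin' S)) := by
    ext x i; simp [Matrix.toLin'_apply]
  have hder : ∀ x ∈ s, HasFDerivWithinAt (fun x : Fin 2 → ℝ => S.mulVec x)
      (LinearMap.toContinuousLinearMap (Matrix.toLin' S)) s x := by
    intro x hx
    rw [hfun]
    exact (LinearMap.toContinuousLinearMap (Matrix.toLin' S)).hasFDerivAt.hasFDerivWithinAt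
  have hinj : Set.InjOn (fun x : Fin 2 → ℝ => S.mulVec x) s :=
    (Matrix.mulVec_injective_iff_isUnit.mpr ((Matrix.isUnit_iff_isUnit_det S).mpr hS)).injOn
  have h := integral_image_eq_integral_abs_det_fderiv_smul volume hs hder hinj g
  rw [h]
  simp only [ContinuousLinearMap.det, LinearMap.coe_toContinuousLinearMap, LinearMap.det_toLin']
  rw [integral_smul, smul_eq_mul]

lemma aux_orth_det {U : Matrix (Fin 2) (Fin 2) ℝ} (h : U * Uᵀ = 1) :
    |U.det| = 1 ∧ IsUnit U.det := by
  have h2 : U.det * U.det = 1 := by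
    have := congrArg Matrix.det h
    rwa [Matrix.det_mul, Matrix.det_transpose, Matrix.det_one] at this
  refine ⟨?_, IsUnit.of_mul_eq_one _ h2⟩
  rcases mul_self_eq_one_iff.mp h2 with h | h <;> rw [h] <;> norm_num

lemma aux_orth_norm {U : Matrix (Fin 2) (Fin 2) ℝ} (h : U * Uᵀ = 1) (x : Fin 2 → ℝ) :
    ∑ i, (U.mulVec x i) ^ 2 = ∑ i, x i ^ 2 := by
  have h' : Uᵀ * U = 1 := mul_eq_one_comm.mp h
  have key : ∀ v : Fin 2 → ℝ, ∑ i, v i ^ 2 = v ⬝ᵥ v := by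
    intro v; simp [dotProduct, pow_two]
  rw [key, key]
  calc U.mulVec x ⬝ᵥ U.mulVec x = Matrix.vecMul (U.mulVec x) (Uᵀ)ᵀ ⬝ᵥ x := by
        rw [Matrix.dotProduct_mulVec, Matrix.transpose_transpose]
    _ = (Uᵀ * U).mulVec x ⬝ᵥ x := by rw [Matrix.vecMul_transpose, Matrix.mulVec_mulVec]
    _ = x ⬝ᵥ x := by rw [h', Matrix.one_mulVec]

lemma aux_orth_image {U : Matrix (Fin 2) (Fin 2) ℝ} (h : U * Uᵀ = 1) :
    U.mulVec '' {x : Fin 2 → ℝ | ∑ i, x i ^ 2 ≤ 1} = {x : Fin 2 → ℝ | ∑ i, x i ^ 2 ≤ 1} := by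
  have h' : Uᵀ * (Uᵀ)ᵀ = 1 := by rw [Matrix.transpose_transpose]; exact mul_eq_one_comm.mp h
  apply subset_antisymm
  · rintro _ ⟨x, hx, rfl⟩
    simp only [Set.mem_setOf_eq] at hx ⊢
    rw [aux_orth_norm h]; exact hx
  · intro x hx
    simp only [Set.mem_setOf_eq] at hx
    refine ⟨Uᵀ.mulVec x, ?_, ?_⟩
    · simp only [Set.mem_setOf_eq]
      rw [aux_orth_norm h']; exact hx
    · rw [Matrix.mulVec_mulVec, h, Matrix.one_mulVec]

lemma aux_ball_meas : MeasurableSet {x : Fin 2 → ℝ | ∑ i, x i ^ 2 ≤ 1} := by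
  have : Continuous fun x : Fin 2 → ℝ => ∑ i, x i ^ 2 :=
    continuous_finset_sum _ fun i _ => (continuous_apply i).pow 2
  exact measurableSet_le this.measurable measurable_const

lemma aux_ball_bdd : Bornology.IsBounded {x : Fin 2 → ℝ | ∑ i, x i ^ 2 ≤ 1} := by
  apply (Metric.isBounded_closedBall (x := (0 : Fin 2 → ℝ)) (r := 1)).subset
  intro x hx
  simp only [Metric.mem_closedBall, dist_zero_right]
  rw [pi_norm_le_iff_of_nonneg (by norm_num)]
  intro i
  rw [Real.norm_eq_abs, abs_le]
  have h1 : x i ^ 2 ≤ 1 := by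
    refine le_trans ?_ hx
    exact Finset.single_le_sum (f := fun j => x j ^ 2) (fun j _ => sq_nonneg _) (Finset.mem_univ i)
  constructor <;> nlinarith

lemma aux_ball_pos : 0 < volume {x : Fin 2 → ℝ | ∑ i, x i ^ 2 ≤ 1} := by
  refine lt_of_lt_of_le (Metric.measure_ball_pos volume (0 : Fin 2 → ℝ) (by norm_num : (0:ℝ) < 1/2)) (measure_mono ?_)
  intro x hx
  simp only [Metric.mem_ball, dist_zero_right] at hx
  have : ∀ i, |x i| ≤ 1/2 := fun i => le_trans (norm_le_pi_norm x i) hx.le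
  have h2 : ∀ i, x i ^ 2 ≤ 1/4 := by
    intro i; have h := this i
    nlinarith [sq_abs (x i), abs_nonneg (x i)]
  calc ∑ i, x i ^ 2 ≤ ∑ _i : Fin 2, (1/4 : ℝ) := Finset.sum_le_sum fun i _ => h2 i
    _ ≤ 1 := by simp; norm_num

lemma aux_avg (p : ℕ) (G : Finset (Matrix (Fin 2) (Fin 2) ℝ)) (hGne : G.Nonempty)
    (horth : ∀ U ∈ G, U * Uᵀ = 1)
    (Fp : Matrix (Fin 2) (Fin 2) ℝ → ℝ)
    (hframe : ∀ (S : Matrix (Fin 2) (Fin 2) ℝ) (x : Fin 2 → ℝ),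
      (1 / (G.card : ℝ)) * ∑ U ∈ G, (∑ i, (S.mulVec (U.mulVec x) i) ^ 2) ^ p
        = Fp S * (∑ i, x i ^ 2) ^ p)
    {s : Set (Fin 2 → ℝ)} (hsm : MeasurableSet s) (hsb : Bornology.IsBounded s)
    (hsinv : ∀ U ∈ G, U.mulVec '' s = s)
    (S : Matrix (Fin 2) (Fin 2) ℝ) :
    ∫ x in s, (∑ i, (S.mulVec x i) ^ 2) ^ p = Fp S * ∫ x in s, (∑ i, x i ^ 2) ^ p := by
  have hcard : ((G.card : ℝ)) ≠ 0 := Nat.cast_ne_zero.mpr hGne.card_pos.ne'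
  have key : ∀ U ∈ G, (∫ x in s, (∑ i, (S.mulVec x i) ^ 2) ^ p)
      = ∫ x in s, (∑ i, (S.mulVec (U.mulVec x) i) ^ 2) ^ p := by
    intro U hU
    conv_lhs => rw [← hsinv U hU]
    rw [aux_cov U (aux_orth_det (horth U hU)).2 hsm, (aux_orth_det (horth U hU)).1, one_mul]
  have hsum : (G.card : ℝ) * ∫ x in s, (∑ i, (S.mulVec x i) ^ 2) ^ p
      = ∑ U ∈ G, ∫ x in s, (∑ i, (S.mulVec (U.mulVec x) i) ^ 2) ^ p := by
    rw [Finset.sum_congr rfl (fun U hU => (key U hU).symm), Finset.sum_const, nsmul_eq_mul]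
  have hint : ∀ U ∈ G, IntegrableOn
      (fun x => (∑ i, (S.mulVec (U.mulVec x) i) ^ 2) ^ p) s volume := by
    intro U hU
    exact aux_intOn (by simpa only [← Matrix.mulVec_mulVec] using aux_cont p (S * U)) hsb
  rw [show (∑ U ∈ G, ∫ x in s, (∑ i, (S.mulVec (U.mulVec x) i) ^ 2) ^ p)
      = ∫ x in s, ∑ U ∈ G, (∑ i, (S.mulVec (U.mulVec x) i) ^ 2) ^ p from
    (integral_finset_sum G hint).symm] at hsum
  have hpt : ∀ x : Fin 2 → ℝ, (∑ U ∈ G, (∑ i, (S.mulVec (U.mulVec x) i) ^ 2) ^ p)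
      = (G.card : ℝ) * (Fp S * (∑ i, x i ^ 2) ^ p) := by
    intro x
    have h := hframe S x
    rw [eq_comm, ← h, ← mul_assoc, mul_one_div, div_self hcard, one_mul]
  rw [show (fun x => ∑ U ∈ G, (∑ i, (S.mulVec (U.mulVec x) i) ^ 2) ^ p)
      = fun x => (G.card : ℝ) * (Fp S * (∑ i, x i ^ 2) ^ p) from funext hpt] at hsum
  rw [integral_const_mul, integral_const_mul] at hsum
  exact mul_left_cancel₀ hcard hsum

lemma aux_pos (p : ℕ) {s : Set (Fin 2 → ℝ)} (hsm : MeasurableSet s)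
    (hsb : Bornology.IsBounded s) (hvol : volume s ≠ 0)
    (S : Matrix (Fin 2) (Fin 2) ℝ) (hS : IsUnit S.det) :
    0 < ∫ x in s, (∑ i, (S.mulVec x i) ^ 2) ^ p := by
  rw [setIntegral_pos_iff_support_of_nonneg_ae]
  · refine lt_of_lt_of_le ?_ (measure_mono (?_ : s \ {0} ⊆ _))
    · rw [measure_diff_null (measure_singleton 0)]
      exact hvol.bot_lt
    · intro x hx
      refine ⟨?_, hx.1⟩
      simp only [Function.mem_support]
      have hx0 : S.mulVec x ≠ 0 := by
        intro hc
        apply hx.2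
        have hinj := Matrix.mulVec_injective_iff_isUnit.mpr ((Matrix.isUnit_iff_isUnit_det S).mpr hS)
        have := hinj (by rw [hc, Matrix.mulVec_zero] : S.mulVec x = S.mulVec 0)
        simp [this]
      obtain ⟨i, hi⟩ := Function.ne_iff.mp hx0
      have hpos : 0 < ∑ i, (S.mulVec x i) ^ 2 := by
        apply Finset.sum_pos' (fun j _ => sq_nonneg _) ⟨i, Finset.mem_univ i, ?_⟩
        simpa using pow_pos (abs_pos.mpr hi) 2 |>.trans_eq (sq_abs _)
      positivity
  · filter_upwards with x using by positivity
  · exact aux_intOn (aux_cont p S) hsb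

lemma aux_polar (T : Matrix (Fin 2) (Fin 2) ℝ) (hT : IsUnit T.det) :
    ∃ Q P : Matrix (Fin 2) (Fin 2) ℝ, Q * Qᵀ = 1 ∧ Pᵀ = P ∧ T = Q * P := by
  have hps : (Tᵀ * T).PosSemidef := by
    have := Matrix.posSemidef_conjTranspose_mul_self T
    rwa [Matrix.conjTranspose_eq_transpose_of_trivial] at this
  open scoped MatrixOrder in
  obtain ⟨P, hPsa, -, hPP'⟩ := CFC.exists_sqrt_of_isSelfAdjoint_of_quasispectrumRestricts
    hps.isHermitian (QuasispectrumRestricts.nnreal_of_nonneg hps.nonneg)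
  have hPP : P * P = Tᵀ * T := hPP'
  have hPsym : Pᵀ = P := by
    rw [← Matrix.conjTranspose_eq_transpose_of_trivial]
    exact hPsa.star_eq
  have hTt : IsUnit Tᵀ.det := by rwa [Matrix.det_transpose]
  have hPdet : IsUnit P.det := by
    have h1 : IsUnit (P.det * P.det) := by
      rw [← Matrix.det_mul, hPP, Matrix.det_mul, Matrix.det_transpose]
      exact hT.mul hT
    exact isUnit_of_mul_isUnit_left h1
  refine ⟨T * P⁻¹, P, ?_, hPsym, ?_⟩
  · have hinv2 : P⁻¹ * P⁻¹ = T⁻¹ * (Tᵀ)⁻¹ := by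
      rw [← Matrix.mul_inv_rev, ← Matrix.mul_inv_rev, hPP]
    rw [Matrix.transpose_mul, Matrix.transpose_nonsing_inv, hPsym]
    calc T * P⁻¹ * (P⁻¹ * Tᵀ) = T * (P⁻¹ * P⁻¹) * Tᵀ := by simp only [Matrix.mul_assoc]
      _ = T * (T⁻¹ * (Tᵀ)⁻¹) * Tᵀ := by rw [hinv2]
      _ = (T * T⁻¹) * ((Tᵀ)⁻¹ * Tᵀ) := by simp only [Matrix.mul_assoc]
      _ = 1 := by rw [Matrix.mul_nonsing_inv T hT, Matrix.nonsing_inv_mul Tᵀ hTt, one_mul]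
  · rw [Matrix.mul_assoc, Matrix.nonsing_inv_mul P hPdet, Matrix.mul_one]

lemma aux_adj (T : Matrix (Fin 2) (Fin 2) ℝ) :
    T.adjugate = !![0,1;-1,0] * Tᵀ * !![0,-1;1,0] := by
  rw [Matrix.eta_fin_two T, Matrix.adjugate_fin_two]
  rw [show (!![T 0 0, T 0 1; T 1 0, T 1 1])ᵀ = !![T 0 0, T 1 0; T 0 1, T 1 1] from by
    ext i j; fin_cases i <;> fin_cases j <;> rfl]
  rw [Matrix.mul_fin_two, Matrix.mul_fin_two]
  norm_num

lemma aux_Jt : (!![0,1;-1,0] : Matrix (Fin 2) (Fin 2) ℝ)ᵀ = !![0,-1;1,0] := by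
  ext i j
  fin_cases i <;> fin_cases j <;> rfl

lemma aux_J_orth : (!![0,1;-1,0] : Matrix (Fin 2) (Fin 2) ℝ) * (!![0,1;-1,0] : Matrix (Fin 2) (Fin 2) ℝ)ᵀ = 1 := by
  rw [aux_Jt, Matrix.mul_fin_two, Matrix.one_fin_two]
  norm_num

lemma aux_smul_inv (T : Matrix (Fin 2) (Fin 2) ℝ) (hT : IsUnit T.det) :
    T.det • T⁻¹ = T.adjugate := by
  rw [Matrix.inv_def, smul_smul, Ring.inverse_eq_inv', mul_inv_cancel₀ hT.ne_zero, one_smul]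

lemma aux_Fp_rel (p : ℕ) (G : Finset (Matrix (Fin 2) (Fin 2) ℝ)) (hGne : G.Nonempty)
    (horth : ∀ U ∈ G, U * Uᵀ = 1)
    (Fp : Matrix (Fin 2) (Fin 2) ℝ → ℝ)
    (hframe : ∀ (S : Matrix (Fin 2) (Fin 2) ℝ) (x : Fin 2 → ℝ),
      (1 / (G.card : ℝ)) * ∑ U ∈ G, (∑ i, (S.mulVec (U.mulVec x) i) ^ 2) ^ p
        = Fp S * (∑ i, x i ^ 2) ^ p)
    (T : Matrix (Fin 2) (Fin 2) ℝ) (hT : IsUnit T.det) :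
    (T.det ^ 2) ^ p * Fp T⁻¹ = Fp T ∧ 0 < Fp T := by
  set B : Set (Fin 2 → ℝ) := {x : Fin 2 → ℝ | ∑ i, x i ^ 2 ≤ 1} with hBdef
  set K : ℝ := ∫ x in B, (∑ i, x i ^ 2) ^ p with hKdef
  have hBinv : ∀ U ∈ G, U.mulVec '' B = B := fun U hU => aux_orth_image (horth U hU)
  have hΦ : ∀ S : Matrix (Fin 2) (Fin 2) ℝ,
      ∫ x in B, (∑ i, (S.mulVec x i) ^ 2) ^ p = Fp S * K :=
    fun S => aux_avg p G hGne horth Fp hframe aux_ball_meas aux_ball_bdd hBinv S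
  have hK : 0 < K := by
    have h := aux_pos p aux_ball_meas aux_ball_bdd aux_ball_pos.ne' 1 (by simp)
    simpa only [Matrix.one_mulVec] using h
  have hRight : ∀ S Q : Matrix (Fin 2) (Fin 2) ℝ, Q * Qᵀ = 1 → Fp (S * Q) = Fp S := by
    intro S Q hQ
    have h1 : ∫ x in B, (∑ i, (S.mulVec x i) ^ 2) ^ p
        = |Q.det| * ∫ x in B, (∑ i, (S.mulVec (Q.mulVec x) i) ^ 2) ^ p := by
      have himg := aux_orth_image hQ
      rw [← hBdef] at himg
      conv_lhs => rw [← himg]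
      rw [hBdef, aux_cov Q (aux_orth_det hQ).2 aux_ball_meas, ← hBdef]
    simp only [Matrix.mulVec_mulVec] at h1
    rw [(aux_orth_det hQ).1, one_mul, hΦ, hΦ] at h1
    exact (mul_right_cancel₀ hK.ne' h1.symm)
  have hLeft : ∀ S Q : Matrix (Fin 2) (Fin 2) ℝ, Q * Qᵀ = 1 → Fp (Q * S) = Fp S := by
    intro S Q hQ
    have h1 : (fun x : Fin 2 → ℝ => (∑ i, ((Q * S).mulVec x i) ^ 2 : ℝ) ^ p)
        = fun x => (∑ i, (S.mulVec x i) ^ 2) ^ p := by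
      funext x
      rw [← Matrix.mulVec_mulVec, aux_orth_norm hQ]
    have h2 := hΦ (Q * S)
    rw [show (∫ x in B, (∑ i, ((Q * S).mulVec x i) ^ 2 : ℝ) ^ p)
        = ∫ x in B, (∑ i, (S.mulVec x i) ^ 2) ^ p from by rw [h1], hΦ] at h2
    exact (mul_right_cancel₀ hK.ne' h2).symm
  have hScale : ∀ (c : ℝ) (S : Matrix (Fin 2) (Fin 2) ℝ), Fp (c • S) = (c ^ 2) ^ p * Fp S := by
    intro c S
    have h1 : (fun x : Fin 2 → ℝ => (∑ i, ((c • S).mulVec x i) ^ 2 : ℝ) ^ p)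
        = fun x => (c ^ 2) ^ p * (∑ i, (S.mulVec x i) ^ 2) ^ p := by
      funext x
      rw [Matrix.smul_mulVec]
      rw [show (∑ i, ((c • S.mulVec x) i) ^ 2 : ℝ) = c ^ 2 * ∑ i, (S.mulVec x i) ^ 2 from by
        rw [Finset.mul_sum]
        exact Finset.sum_congr rfl fun i _ => by simp [mul_pow]]
      rw [mul_pow]
    have h2 := hΦ (c • S)
    rw [show (∫ x in B, (∑ i, ((c • S).mulVec x i) ^ 2 : ℝ) ^ p)
        = ∫ x in B, (c ^ 2) ^ p * (∑ i, (S.mulVec x i) ^ 2) ^ p from by rw [h1],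
      integral_const_mul, hΦ] at h2
    rw [← mul_assoc] at h2
    exact (mul_right_cancel₀ hK.ne' h2).symm
  have hTrans : Fp Tᵀ = Fp T := by
    obtain ⟨Q, P, hQ, hPsym, hQP⟩ := aux_polar T hT
    have hQ' : Qᵀ * (Qᵀ)ᵀ = 1 := by
      rw [Matrix.transpose_transpose]; exact mul_eq_one_comm.mp hQ
    calc Fp Tᵀ = Fp (Pᵀ * Qᵀ) := by rw [hQP, Matrix.transpose_mul]
      _ = Fp (P * Qᵀ) := by rw [hPsym]
      _ = Fp P := hRight P Qᵀ hQ'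
      _ = Fp (Q * P) := (hLeft P Q hQ).symm
      _ = Fp T := by rw [← hQP]
  have hJt : (!![0,1;-1,0] : Matrix (Fin 2) (Fin 2) ℝ)ᵀ * ((!![0,1;-1,0] : Matrix (Fin 2) (Fin 2) ℝ)ᵀ)ᵀ = 1 := by
    rw [Matrix.transpose_transpose]; exact mul_eq_one_comm.mp aux_J_orth
  have hrel : (T.det ^ 2) ^ p * Fp T⁻¹ = Fp T := by
    calc (T.det ^ 2) ^ p * Fp T⁻¹ = Fp (T.det • T⁻¹) := (hScale T.det T⁻¹).symm
      _ = Fp T.adjugate := by rw [aux_smul_inv T hT]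
      _ = Fp (!![0,1;-1,0] * (Tᵀ * (!![0,1;-1,0] : Matrix (Fin 2) (Fin 2) ℝ)ᵀ)) := by
          rw [aux_adj T, aux_Jt, Matrix.mul_assoc]
      _ = Fp (Tᵀ * (!![0,1;-1,0] : Matrix (Fin 2) (Fin 2) ℝ)ᵀ) :=
          hLeft _ _ aux_J_orth
      _ = Fp Tᵀ := hRight _ _ hJt
      _ = Fp T := hTrans
  refine ⟨hrel, ?_⟩
  have h := aux_pos p aux_ball_meas aux_ball_bdd aux_ball_pos.ne' T hT
  rw [hΦ T] at h
  nlinarith [hK, h]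

/-- For a bounded measurable plane set `Ω ⊂ ℝ²` whose (finite, orthogonal)
isometry group admits tight `p`-frames, the scale-invariant ratio
`A^{1+p}/I_{2p}` takes the same value on `T(Ω)` and on `T⁻¹(Ω)` for every
invertible linear `T`. -/
theorem moment_ratio_two_dim (p : ℕ)
    (Ω : Set (Fin 2 → ℝ)) (hbd : Bornology.IsBounded Ω) (hΩ : MeasurableSet Ω)
    (G : Finset (Matrix (Fin 2) (Fin 2) ℝ)) (hGne : G.Nonempty)
    (horth : ∀ U ∈ G, U * Uᵀ = 1)
    (hmul : ∀ U ∈ G, ∀ V ∈ G, U * V ∈ G)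
    (hinv : ∀ U ∈ G, U.mulVec '' Ω = Ω)
    (Fp : Matrix (Fin 2) (Fin 2) ℝ → ℝ)
    (hframe : ∀ (S : Matrix (Fin 2) (Fin 2) ℝ) (x : Fin 2 → ℝ),
      (1 / (G.card : ℝ)) * ∑ U ∈ G, (∑ i, (S.mulVec (U.mulVec x) i) ^ 2) ^ p
        = Fp S * (∑ i, x i ^ 2) ^ p)
    (T : Matrix (Fin 2) (Fin 2) ℝ) (hT : IsUnit T.det) :
    (volume (T.mulVec '' Ω)).toReal ^ (1 + p)
        / ∫ x in T.mulVec '' Ω, (∑ i, x i ^ 2) ^ p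
      = (volume (T⁻¹.mulVec '' Ω)).toReal ^ (1 + p)
        / ∫ x in T⁻¹.mulVec '' Ω, (∑ i, x i ^ 2) ^ p := by
  have hT' : IsUnit T⁻¹.det := by
    rw [Matrix.det_nonsing_inv, Ring.inverse_eq_inv']
    exact hT.inv
  have hvolT := aux_vol T Ω
  have hvolT' := aux_vol T⁻¹ Ω
  by_cases hΩ0 : volume Ω = 0
  · rw [hvolT, hvolT', hΩ0, mul_zero]
    simp [zero_pow (by omega : 1 + p ≠ 0)]
  · -- nondegenerate case
    have hdetinv : |T⁻¹.det| = |T.det|⁻¹ := by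
      rw [Matrix.det_nonsing_inv, Ring.inverse_eq_inv', abs_inv]
    have hI0 : 0 < ∫ x in Ω, (∑ i, x i ^ 2) ^ p := by
      have h := aux_pos p hΩ hbd hΩ0 1 (by simp)
      simpa only [Matrix.one_mulVec] using h
    obtain ⟨hrel, hFpT⟩ := aux_Fp_rel p G hGne horth Fp hframe T hT
    have hFpT' : 0 < Fp T⁻¹ := by
      obtain ⟨_, h⟩ := aux_Fp_rel p G hGne horth Fp hframe T⁻¹ hT'
      exact h
    have hIT : (∫ x in T.mulVec '' Ω, (∑ i, x i ^ 2) ^ p)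
        = |T.det| * (Fp T * ∫ x in Ω, (∑ i, x i ^ 2) ^ p) := by
      rw [aux_cov T hT hΩ, aux_avg p G hGne horth Fp hframe hΩ hbd hinv T]
    have hIT' : (∫ x in T⁻¹.mulVec '' Ω, (∑ i, x i ^ 2) ^ p)
        = |T.det|⁻¹ * (Fp T⁻¹ * ∫ x in Ω, (∑ i, x i ^ 2) ^ p) := by
      rw [aux_cov T⁻¹ hT' hΩ, aux_avg p G hGne horth Fp hframe hΩ hbd hinv T⁻¹, hdetinv]
    have hμfin : volume Ω ≠ ⊤ := hbd.measure_lt_top.ne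
    have ha : 0 < (volume Ω).toReal := ENNReal.toReal_pos hΩ0 hμfin
    have hb : 0 < |T.det| := abs_pos.mpr hT.ne_zero
    have htr : (volume (T.mulVec '' Ω)).toReal = |T.det| * (volume Ω).toReal := by
      rw [hvolT, ENNReal.toReal_mul, ENNReal.toReal_ofReal (abs_nonneg _)]
    have htr' : (volume (T⁻¹.mulVec '' Ω)).toReal = |T.det|⁻¹ * (volume Ω).toReal := by
      rw [hvolT', ENNReal.toReal_mul, ENNReal.toReal_ofReal (abs_nonneg _), hdetinv]
    rw [hIT, hIT', htr, htr']
    set a := (volume Ω).toReal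
    set b := |T.det|
    set I0 := ∫ x in Ω, (∑ i, x i ^ 2) ^ p
    have hbsq : (T.det ^ 2) ^ p = (b ^ 2) ^ p := by rw [← sq_abs]
    rw [← hrel, hbsq]
    rw [div_eq_div_iff (by positivity) (by positivity)]
    field_simp
    rw [div_pow]
    field_simp
    ring
end
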